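/- arXiv:1410.4066 — 10 statements merged into one kernel-verified Lean document; each statement's English description precedes it below -/
import Mathlib

section
/- Suppose f : ℝⁿ → ℝ is differentiable on a convex set S and there exist p, q > 1 with 1/p + 1/q = 1 and M > 0 such that ‖∇f(x) − ∇f(y)‖_q^q ≤ M ‖x − y‖_p^p for all x, y ∈ S. Then for all x, y ∈ S, f(y) ≤ f(x) + ∇f(x)ᵀ(y − x) + (M^{1/q}/p) ‖y − x‖_p^p. -/
open scoped RealInnerProductSpace

noncomputable def lpNorm {n : ℕ} (p : ℝ) (x : EuclideanSpace ℝ (Fin n)) : ℝ :=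
  (∑ i, |x i| ^ p) ^ (1 / p)

section aux
variable {n : ℕ}

lemma lpNorm_nonneg {r : ℝ} (x : EuclideanSpace ℝ (Fin n)) : 0 ≤ lpNorm r x :=
  Real.rpow_nonneg (Finset.sum_nonneg fun i _ => Real.rpow_nonneg (abs_nonneg _) _) _

lemma lpNorm_pow {r : ℝ} (hr : r ≠ 0) (x : EuclideanSpace ℝ (Fin n)) :
    lpNorm r x ^ r = ∑ i, |x i| ^ r := by
  rw [lpNorm, ← Real.rpow_mul
    (Finset.sum_nonneg fun i _ => Real.rpow_nonneg (abs_nonneg _) _),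
    one_div_mul_cancel hr, Real.rpow_one]

lemma coord_le_lpNorm {r : ℝ} (hr : 0 < r) (x : EuclideanSpace ℝ (Fin n)) (i : Fin n) :
    |x i| ≤ lpNorm r x := by
  have h1 : |x i| ^ r ≤ ∑ j, |x j| ^ r :=
    Finset.single_le_sum (f := fun j => |x j| ^ r)
      (fun j _ => Real.rpow_nonneg (abs_nonneg _) _) (Finset.mem_univ i)
  have h2 : (|x i| ^ r) ^ (1/r) ≤ (∑ j, |x j| ^ r) ^ (1/r) :=
    Real.rpow_le_rpow (Real.rpow_nonneg (abs_nonneg _) _) h1 (by positivity)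
  rwa [← Real.rpow_mul (abs_nonneg _), mul_one_div_cancel hr.ne', Real.rpow_one] at h2

lemma lpNorm_smul {r : ℝ} (hr : 0 < r) (t : ℝ) (x : EuclideanSpace ℝ (Fin n)) :
    lpNorm r (t • x) = |t| * lpNorm r x := by
  unfold lpNorm
  have h1 : ∀ i, |(t • x) i| ^ r = |t| ^ r * |x i| ^ r := by
    intro i
    rw [PiLp.smul_apply, smul_eq_mul, abs_mul, Real.mul_rpow (abs_nonneg _) (abs_nonneg _)]
  simp_rw [h1, ← Finset.mul_sum]
  rw [Real.mul_rpow (Real.rpow_nonneg (abs_nonneg _) _)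
    (Finset.sum_nonneg fun i _ => Real.rpow_nonneg (abs_nonneg _) _),
    ← Real.rpow_mul (abs_nonneg _), mul_one_div_cancel hr.ne', Real.rpow_one]

lemma inner_le_lpNorm {p q : ℝ} (hqp : Real.HolderConjugate q p)
    (u w : EuclideanSpace ℝ (Fin n)) : ⟪u, w⟫ ≤ lpNorm q u * lpNorm p w := by
  have h : ⟪u, w⟫ = ∑ i, u i * w i := by
    simp [PiLp.inner_apply, RCLike.inner_apply, mul_comm]
  rw [h, lpNorm, lpNorm]
  calc ∑ i, u i * w i ≤ (∑ i, |u i| ^ q) ^ (1/q) * (∑ i, |w i| ^ p) ^ (1/p) :=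
        Real.inner_le_Lp_mul_Lq Finset.univ u w hqp
    _ = _ := rfl

lemma euclid_norm_le {r : ℝ} (hr : 0 < r) (u : EuclideanSpace ℝ (Fin n)) :
    ‖u‖ ≤ Real.sqrt n * lpNorm r u := by
  have h1 : ‖u‖ = Real.sqrt (∑ i, ‖u i‖ ^ 2) := EuclideanSpace.norm_eq u
  have h2 : (∑ i, ‖u i‖ ^ 2) ≤ n * (lpNorm r u) ^ 2 := by
    calc (∑ i, ‖u i‖ ^ 2) ≤ ∑ _i : Fin n, (lpNorm r u) ^ 2 := by
          refine Finset.sum_le_sum fun i _ => ?_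
          have := coord_le_lpNorm hr u i
          have h0 : (0:ℝ) ≤ |u i| := abs_nonneg _
          rw [Real.norm_eq_abs]
          nlinarith
      _ = n * (lpNorm r u) ^ 2 := by simp [Finset.sum_const, mul_comm]
  rw [h1]
  calc Real.sqrt (∑ i, ‖u i‖ ^ 2) ≤ Real.sqrt (n * (lpNorm r u) ^ 2) :=
        Real.sqrt_le_sqrt h2
    _ = Real.sqrt n * lpNorm r u := by
        rw [Real.sqrt_mul (by positivity), Real.sqrt_sq (lpNorm_nonneg u)]

end aux

theorem stmt_1 {n : ℕ} {S : Set (EuclideanSpace ℝ (Fin n))}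
    (hS : Convex ℝ S)
    {f : EuclideanSpace ℝ (Fin n) → ℝ} {g : EuclideanSpace ℝ (Fin n) → EuclideanSpace ℝ (Fin n)}
    (hf : ∀ x ∈ S, HasGradientAt f (g x) x)
    {p q M : ℝ} (hp : 1 < p) (hq : 1 < q) (hpq : 1 / p + 1 / q = 1) (hM : 0 < M)
    (hHolder : ∀ x ∈ S, ∀ y ∈ S, lpNorm q (g x - g y) ^ q ≤ M * lpNorm p (x - y) ^ p) :
    ∀ x ∈ S, ∀ y ∈ S,
      f y ≤ f x + ⟪g x, y - x⟫ + M ^ (1 / q) / p * lpNorm p (y - x) ^ p := by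
  intro x hx y hy
  have hp0 : (0:ℝ) < p := lt_trans one_pos hp
  have hq0 : (0:ℝ) < q := lt_trans one_pos hq
  have hqp : Real.HolderConjugate q p :=
    ⟨by rw [inv_eq_one_div, inv_eq_one_div, inv_one]; linarith, hq0, hp0⟩
  have hpq' : p * (1/q) = p - 1 := by
    have h : 1/q = 1 - 1/p := by linarith
    rw [h]; field_simp
  set v : EuclideanSpace ℝ (Fin n) := y - x with hv
  set L : ℝ := lpNorm p v with hLdef
  have hL0 : 0 ≤ L := lpNorm_nonneg v
  set c : ℝ → EuclideanSpace ℝ (Fin n) := fun t => x + t • v with hc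
  have hcS : ∀ t ∈ Set.Icc (0:ℝ) 1, c t ∈ S := by
    intro t ht
    have h1 : c t = (1 - t) • x + t • y := by
      simp only [hc, hv]; module
    rw [h1]
    exact hS hx hy (by linarith [ht.2]) ht.1 (by ring)
  -- lpNorm of difference of path points
  have hcd : ∀ s t : ℝ, lpNorm p (c s - c t) = |s - t| * L := by
    intro s t
    have h1 : c s - c t = (s - t) • v := by simp only [hc]; module
    rw [h1, lpNorm_smul hp0]
  -- Hölder estimate on lq norm of gradient differences along the path
  have hqkey : ∀ a b : EuclideanSpace ℝ (Fin n), a ∈ S → b ∈ S →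
      lpNorm q (g a - g b) ≤ (M * lpNorm p (a - b) ^ p) ^ (1/q) := by
    intro a b ha hb
    have h1 := hHolder a ha b hb
    have h2 : lpNorm q (g a - g b) = (lpNorm q (g a - g b) ^ q) ^ (1/q) := by
      rw [← Real.rpow_mul (lpNorm_nonneg _), mul_one_div_cancel hq0.ne', Real.rpow_one]
    rw [h2]
    exact Real.rpow_le_rpow (Real.rpow_nonneg (lpNorm_nonneg _) _) h1 (by positivity)
  -- continuity of g along the path
  have hGcont : ContinuousOn (fun t => g (c t)) (Set.Icc (0:ℝ) 1) := by
    intro a ha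
    have hB : Continuous (fun t : ℝ =>
        Real.sqrt n * (M * (|t - a| * L) ^ p) ^ (1/q)) := by
      apply continuous_const.mul
      apply (Real.continuous_rpow_const (by positivity)).comp
      apply continuous_const.mul
      apply (Real.continuous_rpow_const hp0.le).comp
      exact (continuous_abs.comp (continuous_id.sub continuous_const)).mul continuous_const
    have hB0 : Real.sqrt n * (M * (|a - a| * L) ^ p) ^ (1/q) = 0 := by
      rw [sub_self, abs_zero, zero_mul, Real.zero_rpow hp0.ne', mul_zero,
        Real.zero_rpow (by positivity), mul_zero]
    have hBlim : Filter.Tendsto (fun t : ℝ =>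
        Real.sqrt n * (M * (|t - a| * L) ^ p) ^ (1/q)) (nhdsWithin a (Set.Icc 0 1)) (nhds 0) := by
      have := (hB.tendsto a).mono_left (nhdsWithin_le_nhds (s := Set.Icc (0:ℝ) 1))
      rwa [hB0] at this
    have key : Filter.Tendsto (fun t => ‖g (c t) - g (c a)‖)
        (nhdsWithin a (Set.Icc 0 1)) (nhds 0) := by
      apply squeeze_zero' (Filter.Eventually.of_forall fun t => norm_nonneg _)
        (eventually_nhdsWithin_of_forall ?_) hBlim
      intro t ht
      calc ‖g (c t) - g (c a)‖ ≤ Real.sqrt n * lpNorm q (g (c t) - g (c a)) :=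
            euclid_norm_le hq0 _
        _ ≤ Real.sqrt n * (M * (|t - a| * L) ^ p) ^ (1/q) := by
            apply mul_le_mul_of_nonneg_left _ (Real.sqrt_nonneg _)
            have := hqkey (c t) (c a) (hcS t ht) (hcS a ha)
            rwa [hcd t a] at this
    unfold ContinuousWithinAt
    rw [tendsto_iff_norm_sub_tendsto_zero]
    exact key
  have hIcont : ContinuousOn (fun t => ⟪g (c t), v⟫) (Set.Icc (0:ℝ) 1) :=
    hGcont.inner continuousOn_const
  have hInt : IntervalIntegrable (fun t => ⟪g (c t), v⟫) MeasureTheory.volume 0 1 := by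
    apply ContinuousOn.intervalIntegrable
    rwa [Set.uIcc_of_le zero_le_one]
  -- derivative along the path
  have hderiv : ∀ t ∈ Set.uIcc (0:ℝ) 1, HasDerivAt (fun s => f (c s)) ⟪g (c t), v⟫ t := by
    intro t ht
    rw [Set.uIcc_of_le zero_le_one] at ht
    have h1 : HasDerivAt c v t := by
      have := ((hasDerivAt_id t).smul_const v).const_add x
      simp only [one_smul] at this; exact this
    have h2 := (hf (c t) (hcS t ht)).hasFDerivAt
    have h3 := h2.comp_hasDerivAt t h1
    simp [InnerProductSpace.toDual_apply_apply, Function.comp] at h3; exact h3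
  have hftc : ∫ t in (0:ℝ)..1, ⟪g (c t), v⟫ = f (c 1) - f (c 0) :=
    intervalIntegral.integral_eq_sub_of_hasDerivAt hderiv hInt
  have hc0 : c 0 = x := by simp [hc]
  have hc1 : c 1 = y := by simp only [hc, one_smul, hv]; abel
  -- pointwise bound on the integrand
  have hbound : ∀ t ∈ Set.Icc (0:ℝ) 1,
      ⟪g (c t), v⟫ ≤ ⟪g x, v⟫ + M ^ (1/q) * L ^ (p-1) * L * t ^ (p-1) := by
    intro t ht
    have h1 : ⟪g (c t), v⟫ - ⟪g x, v⟫ = ⟪g (c t) - g x, v⟫ := (inner_sub_left _ _ _).symm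
    have h2 : ⟪g (c t) - g x, v⟫ ≤ lpNorm q (g (c t) - g x) * lpNorm p v :=
      inner_le_lpNorm hqp _ _
    have h3 : lpNorm q (g (c t) - g x) ≤ (M * (t * L) ^ p) ^ (1/q) := by
      have := hqkey (c t) x (hcS t ht) hx
      have hd : lpNorm p (c t - x) = t * L := by
        have h4 : c t - x = t • v := by simp only [hc]; module
        rw [h4, lpNorm_smul hp0, abs_of_nonneg ht.1]
      rwa [hd] at this
    have h5 : (M * (t * L) ^ p) ^ (1/q) = M ^ (1/q) * t ^ (p-1) * L ^ (p-1) := by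
      have htL : (0:ℝ) ≤ t * L := mul_nonneg ht.1 hL0
      rw [Real.mul_rpow hM.le (Real.rpow_nonneg htL _),
        ← Real.rpow_mul htL, hpq',
        Real.mul_rpow ht.1 hL0]
      ring
    nlinarith [mul_le_mul_of_nonneg_right h3 hL0,
      Real.rpow_nonneg hL0 (p-1), Real.rpow_nonneg ht.1 (p-1), Real.rpow_nonneg hM.le (1/q)]
  -- integrate the bound
  have hBint : IntervalIntegrable
      (fun t : ℝ => ⟪g x, v⟫ + M ^ (1/q) * L ^ (p-1) * L * t ^ (p-1))
      MeasureTheory.volume 0 1 := by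
    apply Continuous.intervalIntegrable
    exact continuous_const.add (continuous_const.mul (Real.continuous_rpow_const (by linarith)))
  have hmono : ∫ t in (0:ℝ)..1, ⟪g (c t), v⟫ ≤
      ∫ t in (0:ℝ)..1, (⟪g x, v⟫ + M ^ (1/q) * L ^ (p-1) * L * t ^ (p-1)) := by
    apply intervalIntegral.integral_mono_on zero_le_one hInt hBint hbound
  have hval : ∫ t in (0:ℝ)..1, (⟪g x, v⟫ + M ^ (1/q) * L ^ (p-1) * L * t ^ (p-1)) =
      ⟪g x, v⟫ + M ^ (1/q) * L ^ (p-1) * L * (1/p) := by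
    rw [intervalIntegral.integral_add (g := fun t : ℝ => M ^ (1/q) * L ^ (p-1) * L * t ^ (p-1)) (intervalIntegrable_const)
      ((continuous_const.mul (Real.continuous_rpow_const (by linarith))).intervalIntegrable 0 1),
      intervalIntegral.integral_const, intervalIntegral.integral_const_mul,
      integral_rpow (Or.inl (by linarith))]
    have : p - 1 + 1 = p := by ring
    rw [this, Real.one_rpow, Real.zero_rpow hp0.ne']
    simp
  have hLp : L ^ (p-1) * L = L ^ p := by
    nth_rewrite 2 [← Real.rpow_one L]
    rw [← Real.rpow_add' hL0 (by ring_nf; positivity)]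
    ring_nf
  have hftc' : ∫ t in (0:ℝ)..1, ⟪g (c t), v⟫ = f y - f x := by
    rw [hftc, hc0, hc1]
  have hfin : f y - f x ≤ ⟪g x, v⟫ + M ^ (1/q) / p * L ^ p := by
    rw [← hftc']
    calc ∫ t in (0:ℝ)..1, ⟪g (c t), v⟫ ≤
        ⟪g x, v⟫ + M ^ (1/q) * L ^ (p-1) * L * (1/p) := le_of_le_of_eq hmono hval
      _ = ⟪g x, v⟫ + M ^ (1/q) / p * L ^ p := by
          rw [← hLp]; ring
  linarith [hfin]
end

section
/- For 1 < p ≤ 2, there exists λ > 0 such that for all real numbers u, v ≥ 0, v^p ≤ u^p + p u^{p-1}(v − u) + (λ/2)|v − u|^p. -/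
open Real
open scoped NNReal

private lemma subadd_rpow {q x y : ℝ} (hq0 : 0 ≤ q) (hq1 : q ≤ 1) (hx : 0 ≤ x) (hy : 0 ≤ y) :
    (x + y) ^ q ≤ x ^ q + y ^ q := by
  lift x to ℝ≥0 using hx
  lift y to ℝ≥0 using hy
  have h := NNReal.rpow_add_le_add_rpow x y hq0 hq1
  exact_mod_cast h

private lemma case_up {p u h : ℝ} (hp1 : 1 < p) (hp2 : p ≤ 2) (hu : 0 ≤ u) (hh : 0 ≤ h) :
    (u + h) ^ p ≤ u ^ p + p * u ^ (p - 1) * h + h ^ p := by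
  set f : ℝ → ℝ := fun x => u ^ p + p * u ^ (p - 1) * x + x ^ p - (u + x) ^ p with hf
  have hp0 : (0 : ℝ) < p := lt_trans one_pos hp1
  have hderiv : ∀ x : ℝ, 0 < x →
      HasDerivAt f (p * u ^ (p - 1) + p * x ^ (p - 1) - p * (u + x) ^ (p - 1)) x := by
    intro x hx
    have h1 : HasDerivAt (fun x : ℝ => u ^ p + p * u ^ (p - 1) * x)
        (p * u ^ (p - 1)) x := by
      simpa using ((hasDerivAt_id x).const_mul (p * u ^ (p - 1))).const_add (u ^ p)
    have h2 : HasDerivAt (fun x : ℝ => x ^ p) (p * x ^ (p - 1)) x :=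
      Real.hasDerivAt_rpow_const (p := p) (x := x) (Or.inl (ne_of_gt hx))
    have h3 : HasDerivAt (fun x : ℝ => (u + x) ^ p) (p * (u + x) ^ (p - 1)) x := by
      have hux : u + x ≠ 0 := ne_of_gt (by linarith)
      have hb : HasDerivAt (fun x : ℝ => u + x) 1 x := (hasDerivAt_id x).const_add u
      have := (Real.hasDerivAt_rpow_const (p := p) (x := u + x) (Or.inl hux)).comp x hb
      simpa [Function.comp_def] using this
    exact (h1.add h2).sub h3
  have hcont : ContinuousOn f (Set.Ici 0) := by
    apply ContinuousOn.sub
    · apply ContinuousOn.add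
      · exact (continuous_const.add (continuous_const.mul continuous_id)).continuousOn
      · exact (continuous_id.rpow_const fun x => Or.inr hp0.le).continuousOn
    · exact ((continuous_const.add continuous_id).rpow_const
        fun x => Or.inr hp0.le).continuousOn
  have hmono : MonotoneOn f (Set.Ici 0) := by
    apply monotoneOn_of_deriv_nonneg (convex_Ici 0) hcont
    · intro x hx
      rw [interior_Ici] at hx
      exact (hderiv x hx).differentiableAt.differentiableWithinAt
    · intro x hx
      rw [interior_Ici] at hx
      replace hx : 0 < x := hx
      rw [(hderiv x hx).deriv]
      have hsub : (u + x) ^ (p - 1) ≤ u ^ (p - 1) + x ^ (p - 1) :=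
        subadd_rpow (by linarith) (by linarith) hu hx.le
      nlinarith
  have h0 : f 0 = 0 := by
    simp [hf, Real.zero_rpow (ne_of_gt hp0)]
  have := hmono (Set.self_mem_Ici) (Set.mem_Ici.mpr hh) hh
  rw [h0] at this
  simp only [hf] at this
  linarith

private lemma case_down {p v h : ℝ} (hp1 : 1 < p) (hp2 : p ≤ 2) (hv : 0 ≤ v) (hh : 0 ≤ h) :
    v ^ p ≤ (v + h) ^ p - p * (v + h) ^ (p - 1) * h + h ^ p := by
  set g : ℝ → ℝ := fun x => (v + x) ^ p - p * (v + x) ^ (p - 1) * x + x ^ p - v ^ p with hg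
  have hp0 : (0 : ℝ) < p := lt_trans one_pos hp1
  have hderiv : ∀ x : ℝ, 0 < x →
      HasDerivAt g (p * x ^ (p - 1) - p * (p - 1) * (v + x) ^ (p - 2) * x) x := by
    intro x hx
    replace hx : 0 < x := hx
    have hvx : (0 : ℝ) < v + x := by linarith
    have hb : HasDerivAt (fun x : ℝ => v + x) 1 x := (hasDerivAt_id x).const_add v
    have h1 : HasDerivAt (fun x : ℝ => (v + x) ^ p) (p * (v + x) ^ (p - 1)) x := by
      have := (Real.hasDerivAt_rpow_const (p := p) (x := v + x)
        (Or.inl hvx.ne')).comp x hb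
      simpa [Function.comp_def] using this
    have h2 : HasDerivAt (fun x : ℝ => (v + x) ^ (p - 1))
        ((p - 1) * (v + x) ^ (p - 2)) x := by
      have := (Real.hasDerivAt_rpow_const (p := p - 1) (x := v + x)
        (Or.inl hvx.ne')).comp x hb
      simpa [Function.comp_def, show p - 1 - 1 = p - 2 by ring] using this
    have h3 : HasDerivAt (fun x : ℝ => p * (v + x) ^ (p - 1) * x)
        (p * ((p - 1) * (v + x) ^ (p - 2)) * x + p * (v + x) ^ (p - 1)) x := by
      have := ((h2.const_mul p).mul (hasDerivAt_id x))
      have this' : HasDerivAt (fun x : ℝ => p * (v + x) ^ (p - 1) * x) _ x := this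
      convert this' using 1
      simp only [id_eq]
      ring
    have h4 : HasDerivAt (fun x : ℝ => x ^ p) (p * x ^ (p - 1)) x :=
      Real.hasDerivAt_rpow_const (p := p) (x := x) (Or.inl (ne_of_gt hx))
    have := ((h1.sub h3).add h4).sub (hasDerivAt_const x (v ^ p))
    have this' : HasDerivAt g _ x := this
    convert this' using 1; ring
  have hcont : ContinuousOn g (Set.Ici 0) := by
    have c1 : Continuous fun x : ℝ => (v + x) ^ p :=
      (continuous_const.add continuous_id).rpow_const fun x => Or.inr hp0.le
    have c2 : Continuous fun x : ℝ => (v + x) ^ (p - 1) :=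
      (continuous_const.add continuous_id).rpow_const fun x => Or.inr (by linarith)
    have c3 : Continuous fun x : ℝ => x ^ p :=
      continuous_id.rpow_const fun x => Or.inr hp0.le
    exact (((c1.sub ((continuous_const.mul c2).mul continuous_id)).add c3).sub
      continuous_const).continuousOn
  have hmono : MonotoneOn g (Set.Ici 0) := by
    apply monotoneOn_of_deriv_nonneg (convex_Ici 0) hcont
    · intro x hx
      rw [interior_Ici] at hx
      exact (hderiv x hx).differentiableAt.differentiableWithinAt
    · intro x hx
      rw [interior_Ici] at hx
      replace hx : 0 < x := hx
      rw [(hderiv x hx).deriv]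
      have hvx : (0 : ℝ) < v + x := by linarith
      have hle : (v + x) ^ (p - 2) ≤ x ^ (p - 2) :=
        Real.rpow_le_rpow_of_nonpos hx (by linarith) (by linarith)
      have hxp : x ^ (p - 1) = x * x ^ (p - 2) := by
        rw [show p - 1 = 1 + (p - 2) by ring, Real.rpow_add hx, Real.rpow_one]
      have hxpow : (0 : ℝ) ≤ x ^ (p - 2) := Real.rpow_nonneg hx.le _
      have hvpow : (0 : ℝ) ≤ (v + x) ^ (p - 2) := Real.rpow_nonneg hvx.le _
      have h5 : (p - 1) * (v + x) ^ (p - 2) ≤ x ^ (p - 2) := by nlinarith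
      have key : (p - 1) * (v + x) ^ (p - 2) * x ≤ x ^ (p - 1) := by
        rw [hxp]
        nlinarith [mul_le_mul_of_nonneg_right h5 hx.le]
      nlinarith
  have h0 : g 0 = 0 := by
    simp [hg, Real.zero_rpow (ne_of_gt hp0)]
  have := hmono (Set.self_mem_Ici) (Set.mem_Ici.mpr hh) hh
  rw [h0] at this
  simp only [hg] at this
  linarith

theorem stmt_2 {p : ℝ} (hp1 : 1 < p) (hp2 : p ≤ 2) :
    ∃ l : ℝ, 0 < l ∧ ∀ u v : ℝ, 0 ≤ u → 0 ≤ v →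
      v ^ p ≤ u ^ p + p * u ^ (p - 1) * (v - u) + l / 2 * |v - u| ^ p := by
  refine ⟨2, two_pos, fun u v hu hv => ?_⟩
  rcases le_total u v with huv | huv
  · have h := case_up hp1 hp2 hu (sub_nonneg.mpr huv)
    rw [add_sub_cancel] at h
    rw [abs_of_nonneg (sub_nonneg.mpr huv)]
    linarith
  · have h := case_down hp1 hp2 hv (sub_nonneg.mpr huv)
    rw [add_sub_cancel] at h
    rw [abs_of_nonpos (sub_nonpos.mpr huv)]
    have : p * u ^ (p - 1) * (v - u) = -(p * u ^ (p - 1) * (u - v)) := by ring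
    rw [this]
    have hneg : -(v - u) = u - v := by ring
    rw [hneg]
    linarith
end

section
/- Fix 1 < p ≤ 2. The function g(k) defined by g(1) = 0 and g(k) = (k^p − 1 − p(k−1))/|k−1|^p for k ≠ 1 is bounded above on [0, ∞); in particular lim_{k→∞} g(k) = 1. -/
open Filter

lemma subadd_rpow_s3 {q a b : ℝ} (hq0 : 0 ≤ q) (hq1 : q ≤ 1) (ha : 0 ≤ a) (hb : 0 ≤ b) :
    (a + b) ^ q ≤ a ^ q + b ^ q := by
  have h := NNReal.rpow_add_le_add_rpow a.toNNReal b.toNNReal hq0 hq1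
  have h2 : ((a.toNNReal + b.toNNReal : NNReal) : ℝ) ^ q ≤
      (a.toNNReal : ℝ) ^ q + (b.toNNReal : ℝ) ^ q := by exact_mod_cast h
  rwa [NNReal.coe_add, Real.coe_toNNReal _ ha, Real.coe_toNNReal _ hb] at h2

lemma key1 {p : ℝ} (hp1 : 1 < p) (hp2 : p ≤ 2) {s : ℝ} (hs : 0 ≤ s) :
    (1 + s) ^ p ≤ 1 + p * s + s ^ p := by
  set f : ℝ → ℝ := fun s => 1 + p * s + s ^ p - (1 + s) ^ p with hf
  have hderiv : ∀ x : ℝ, HasDerivAt f (p + p * x ^ (p - 1) - p * (1 + x) ^ (p - 1)) x := by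
    intro x
    have h1 : HasDerivAt (fun x : ℝ => x ^ p) (p * x ^ (p - 1)) x :=
      Real.hasDerivAt_rpow_const (Or.inr hp1.le)
    have h2 : HasDerivAt (fun x : ℝ => (1 + x) ^ p) (p * (1 + x) ^ (p - 1)) x := by
      have := (Real.hasDerivAt_rpow_const (x := 1 + x) (p := p) (Or.inr hp1.le)).comp x
        ((hasDerivAt_const x (1 : ℝ)).add (hasDerivAt_id x))
      simpa [Function.comp_def] using this
    have h3 : HasDerivAt (fun x : ℝ => 1 + p * x + x ^ p) (p + p * x ^ (p - 1)) x := by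
      have := ((hasDerivAt_const x (1 : ℝ)).add ((hasDerivAt_id x).const_mul p)).add h1
      simpa [mul_one, Pi.add_def] using this
    exact h3.sub h2
  have hmono : MonotoneOn f (Set.Ici (0 : ℝ)) := by
    apply monotoneOn_of_deriv_nonneg (convex_Ici 0)
      (fun x _ => (hderiv x).continuousAt.continuousWithinAt)
      (fun x hx => (hderiv x).differentiableAt.differentiableWithinAt)
    intro x hx
    rw [interior_Ici] at hx
    rw [(hderiv x).deriv]
    have hq0 : (0 : ℝ) ≤ p - 1 := by linarith
    have hsub : (1 + x) ^ (p - 1) ≤ 1 + x ^ (p - 1) := by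
      have h := subadd_rpow_s3 hq0 (by linarith) zero_le_one hx.le
      rwa [Real.one_rpow] at h
    nlinarith [hp1]
  have h0 : f 0 = 0 := by simp [hf, Real.zero_rpow (by linarith : p ≠ 0), Real.one_rpow]
  have := hmono (Set.self_mem_Ici) hs hs
  rw [h0] at this
  simp only [hf] at this
  linarith

lemma key2 {p : ℝ} (hp1 : 1 < p) (hp2 : p ≤ 2) {t : ℝ} (ht0 : 0 ≤ t) (ht1 : t ≤ 1) :
    (1 - t) ^ p ≤ 1 - p * t + t ^ p := by
  set f : ℝ → ℝ := fun t => 1 - p * t + t ^ p - (1 - t) ^ p with hf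
  have hderiv : ∀ x : ℝ, HasDerivAt f (-p + p * x ^ (p - 1) + p * (1 - x) ^ (p - 1)) x := by
    intro x
    have h1 : HasDerivAt (fun x : ℝ => x ^ p) (p * x ^ (p - 1)) x :=
      Real.hasDerivAt_rpow_const (Or.inr hp1.le)
    have h2 : HasDerivAt (fun x : ℝ => (1 - x) ^ p) (-(p * (1 - x) ^ (p - 1))) x := by
      have := (Real.hasDerivAt_rpow_const (x := 1 - x) (p := p) (Or.inr hp1.le)).comp x
        ((hasDerivAt_const x (1 : ℝ)).sub (hasDerivAt_id x))
      simpa [Function.comp_def] using this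
    have h3 : HasDerivAt (fun x : ℝ => 1 - p * x + x ^ p) (-p + p * x ^ (p - 1)) x := by
      have := ((hasDerivAt_const x (1 : ℝ)).sub ((hasDerivAt_id x).const_mul p)).add h1
      simpa [mul_one, Pi.add_def, Pi.sub_def] using this
    have := h3.sub h2
    rw [sub_neg_eq_add] at this; exact this
  have hmono : MonotoneOn f (Set.Icc (0 : ℝ) 1) := by
    apply monotoneOn_of_deriv_nonneg (convex_Icc 0 1)
      (fun x _ => (hderiv x).continuousAt.continuousWithinAt)
      (fun x hx => (hderiv x).differentiableAt.differentiableWithinAt)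
    intro x hx
    rw [interior_Icc] at hx
    rw [(hderiv x).deriv]
    have hq0 : (0 : ℝ) ≤ p - 1 := by linarith
    have hsub : (1 : ℝ) ≤ x ^ (p - 1) + (1 - x) ^ (p - 1) := by
      have h := subadd_rpow_s3 hq0 (by linarith) hx.1.le (by linarith [hx.2] : (0:ℝ) ≤ 1 - x)
      rwa [add_sub_cancel, Real.one_rpow] at h
    nlinarith [hp1]
  have h0 : f 0 = 0 := by simp [hf, Real.zero_rpow (by linarith : p ≠ 0), Real.one_rpow]
  have := hmono (Set.mem_Icc.2 ⟨le_refl 0, zero_le_one⟩) (Set.mem_Icc.2 ⟨ht0, ht1⟩) ht0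
  rw [h0] at this
  simp only [hf] at this
  linarith

theorem stmt_3 {p : ℝ} (hp1 : 1 < p) (hp2 : p ≤ 2)
    {g : ℝ → ℝ} (hg1 : g 1 = 0)
    (hg : ∀ k : ℝ, k ≠ 1 → g k = (k ^ p - 1 - p * (k - 1)) / |k - 1| ^ p) :
    (∃ C : ℝ, ∀ k ∈ Set.Ici (0 : ℝ), g k ≤ C) ∧ Tendsto g atTop (nhds 1) := by
  constructor
  · refine ⟨1, fun k hk => ?_⟩
    have hk0 : (0:ℝ) ≤ k := hk
    rcases lt_trichotomy k 1 with hlt | heq | hgt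
    · -- 0 ≤ k < 1
      rw [hg k hlt.ne]
      have habs : |k - 1| = 1 - k := by rw [abs_of_nonpos (by linarith)]; ring
      rw [habs]
      have hpos : (0 : ℝ) < (1 - k) ^ p := Real.rpow_pos_of_pos (by linarith) p
      rw [div_le_one hpos]
      have := key2 hp1 hp2 (by linarith : (0:ℝ) ≤ 1 - k) (by linarith : (1:ℝ) - k ≤ 1)
      have hk' : (1 : ℝ) - (1 - k) = k := by ring
      rw [hk'] at this
      linarith
    · rw [heq, hg1]; norm_num
    · -- k > 1
      rw [hg k hgt.ne']
      have habs : |k - 1| = k - 1 := abs_of_pos (by linarith)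
      rw [habs]
      have hpos : (0 : ℝ) < (k - 1) ^ p := Real.rpow_pos_of_pos (by linarith) p
      rw [div_le_one hpos]
      have := key1 hp1 hp2 (by linarith : (0:ℝ) ≤ k - 1)
      have hk' : (1 : ℝ) + (k - 1) = k := by ring
      rw [hk'] at this
      linarith
  · -- limit at infinity
    have hev : ∀ᶠ k in atTop, g k =
        (k / (k - 1)) ^ p - (k - 1) ^ (-p) - p * (k - 1) ^ (1 - p) := by
      filter_upwards [eventually_gt_atTop (1 : ℝ)] with k hk
      have hk1 : (0 : ℝ) < k - 1 := by linarith
      rw [hg k hk.ne', abs_of_pos hk1]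
      rw [Real.div_rpow (by linarith) hk1.le]
      rw [Real.rpow_neg hk1.le, Real.rpow_sub hk1, Real.rpow_one]
      have hne : (k - 1) ^ p ≠ 0 := (Real.rpow_pos_of_pos hk1 p).ne'
      field_simp
      try ring
    have hev' : g =ᶠ[atTop] fun k =>
        (k / (k - 1)) ^ p - (k - 1) ^ (-p) - p * (k - 1) ^ (1 - p) := hev
    have hsub : Tendsto (fun k : ℝ => k - 1) atTop atTop := tendsto_atTop_add_const_right _ _ tendsto_id
    have t1 : Tendsto (fun k : ℝ => (k / (k - 1)) ^ p) atTop (nhds 1) := by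
      have hd : Tendsto (fun k : ℝ => k / (k - 1)) atTop (nhds 1) := by
        have : Tendsto (fun k : ℝ => 1 + (k - 1)⁻¹) atTop (nhds (1 + 0)) :=
          tendsto_const_nhds.add (tendsto_inv_atTop_zero.comp hsub)
        rw [add_zero] at this
        apply this.congr'
        filter_upwards [eventually_gt_atTop (1 : ℝ)] with k hk
        have hne : k - 1 ≠ 0 := by linarith
        field_simp
        ring
      have hc : ContinuousAt (fun x : ℝ => x ^ p) 1 :=
        (Real.continuousAt_rpow_const 1 p (Or.inl one_ne_zero))
      have := hc.tendsto.comp hd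
      simpa [Real.one_rpow, Function.comp_def] using this
    have t2 : Tendsto (fun k : ℝ => (k - 1) ^ (-p)) atTop (nhds 0) :=
      (tendsto_rpow_neg_atTop (by linarith)).comp hsub
    have t3 : Tendsto (fun k : ℝ => p * (k - 1) ^ (1 - p)) atTop (nhds (p * 0)) := by
      apply Tendsto.const_mul
      have : Tendsto (fun x : ℝ => x ^ (-(p - 1))) atTop (nhds 0) :=
        tendsto_rpow_neg_atTop (by linarith)
      have heq : ∀ x : ℝ, x ^ (-(p - 1)) = x ^ (1 - p) := by intro x; ring_nf
      simpa [heq, Function.comp_def] using this.comp hsub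
    rw [mul_zero] at t3
    have hF := (t1.sub t2).sub t3
    rw [sub_zero, sub_zero] at hF
    exact hF.congr' hev'.symm
end

section
/- Let p ≥ 2 be a real number. For any real numbers a, b, c, (sign(a−c)|a−c|^{p−1} − sign(b−c)|b−c|^{p−1})(a − b) ≥ (1/2)^{p−2} |a − b|^p. -/
private lemma superadd {q : ℝ} (hq : 1 ≤ q) {u v : ℝ} (hu : 0 ≤ u) (hv : 0 ≤ v) :
    u ^ q + v ^ q ≤ (u + v) ^ q := by
  have h := NNReal.add_rpow_le_rpow_add u.toNNReal v.toNNReal hq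
  have := NNReal.coe_le_coe.mpr h
  push_cast [NNReal.coe_rpow, Real.coe_toNNReal u hu, Real.coe_toNNReal v hv] at this
  simpa using this

private lemma pmean {q : ℝ} (hq : 1 ≤ q) {u v : ℝ} (hu : 0 ≤ u) (hv : 0 ≤ v) :
    (u + v) ^ q ≤ 2 ^ (q - 1) * (u ^ q + v ^ q) := by
  have h := NNReal.rpow_add_le_mul_rpow_add_rpow u.toNNReal v.toNNReal hq
  have := NNReal.coe_le_coe.mpr h
  push_cast [NNReal.coe_rpow, Real.coe_toNNReal u hu, Real.coe_toNNReal v hv] at this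
  simpa using this

private lemma phi_nonneg {q : ℝ} (hq : 0 < q) {t : ℝ} (ht : 0 ≤ t) :
    Real.sign t * |t| ^ q = t ^ q := by
  rcases eq_or_lt_of_le ht with h | h
  · simp [← h, Real.sign_zero, Real.zero_rpow hq.ne']
  · rw [Real.sign_of_pos h, abs_of_pos h, one_mul]

private lemma phi_nonpos {q : ℝ} (hq : 0 < q) {t : ℝ} (ht : t ≤ 0) :
    Real.sign t * |t| ^ q = -(-t) ^ q := by
  rcases eq_or_lt_of_le ht with h | h
  · simp [h, Real.sign_zero, Real.zero_rpow hq.ne']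
  · rw [Real.sign_of_neg h, abs_of_neg h, neg_one_mul]

private lemma key {p : ℝ} (hp : 2 ≤ p) {x y : ℝ} (h : y ≤ x) :
    (1 / 2 : ℝ) ^ (p - 2) * (x - y) ^ (p - 1)
      ≤ Real.sign x * |x| ^ (p - 1) - Real.sign y * |y| ^ (p - 1) := by
  have hq : (1:ℝ) ≤ p - 1 := by linarith
  have hq0 : (0:ℝ) < p - 1 := by linarith
  have hxy : 0 ≤ x - y := by linarith
  have hc1 : (1 / 2 : ℝ) ^ (p - 2) ≤ 1 :=
    Real.rpow_le_one (by norm_num) (by norm_num) (by linarith)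
  have hcpos : (0:ℝ) < (1 / 2 : ℝ) ^ (p - 2) := Real.rpow_pos_of_pos (by norm_num) _
  rcases le_or_gt 0 y with hy | hy
  · have hx : 0 ≤ x := le_trans hy h
    rw [phi_nonneg hq0 hx, phi_nonneg hq0 hy]
    have h1 : (x - y) ^ (p - 1) + y ^ (p - 1) ≤ x ^ (p - 1) := by
      have := superadd hq hxy hy
      simpa [sub_add_cancel] using this
    have h2 : (1 / 2 : ℝ) ^ (p - 2) * (x - y) ^ (p - 1) ≤ (x - y) ^ (p - 1) := by
      nlinarith [Real.rpow_nonneg hxy (p - 1)]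
    linarith
  rcases le_or_gt x 0 with hx | hx
  · rw [phi_nonpos hq0 hx, phi_nonpos hq0 hy.le]
    have h1 : (x - y) ^ (p - 1) + (-x) ^ (p - 1) ≤ (-y) ^ (p - 1) := by
      have := superadd hq hxy (neg_nonneg.mpr hx)
      rwa [show x - y + -x = -y by ring] at this
    have h2 : (1 / 2 : ℝ) ^ (p - 2) * (x - y) ^ (p - 1) ≤ (x - y) ^ (p - 1) := by
      nlinarith [Real.rpow_nonneg hxy (p - 1)]
    linarith
  · rw [phi_nonneg hq0 hx.le, phi_nonpos hq0 hy.le, sub_neg_eq_add]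
    have h1 : (x + -y) ^ (p - 1) ≤ 2 ^ (p - 2) * (x ^ (p - 1) + (-y) ^ (p - 1)) := by
      have := pmean hq hx.le (neg_nonneg.mpr hy.le)
      simpa [show p - 1 - 1 = p - 2 by ring] using this
    have hx' : x - y = x + -y := by ring
    rw [hx']
    have h2 : (1 / 2 : ℝ) ^ (p - 2) * (2:ℝ) ^ (p - 2) = 1 := by
      rw [one_div, Real.inv_rpow (by norm_num : (0:ℝ) ≤ 2),
        inv_mul_cancel₀ (Real.rpow_pos_of_pos two_pos _).ne']
    calc (1 / 2 : ℝ) ^ (p - 2) * (x + -y) ^ (p - 1)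
        ≤ (1 / 2 : ℝ) ^ (p - 2) * (2 ^ (p - 2) * (x ^ (p - 1) + (-y) ^ (p - 1))) := by
          exact mul_le_mul_of_nonneg_left h1 hcpos.le
      _ = x ^ (p - 1) + (-y) ^ (p - 1) := by rw [← mul_assoc, h2, one_mul]

theorem stmt_4 {p : ℝ} (hp : 2 ≤ p) (a b c : ℝ) :
    (Real.sign (a - c) * |a - c| ^ (p - 1) - Real.sign (b - c) * |b - c| ^ (p - 1)) * (a - b)
      ≥ (1 / 2 : ℝ) ^ (p - 2) * |a - b| ^ p := by
  rcases le_total b a with h | h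
  · -- a - c ≥ b - c
    have hkey := key hp (show b - c ≤ a - c by linarith)
    have hab : 0 ≤ a - b := by linarith
    have habs : |a - b| = a - b := abs_of_nonneg hab
    have hsub : (a - c) - (b - c) = a - b := by ring
    rw [hsub] at hkey
    have := mul_le_mul_of_nonneg_right hkey hab
    rw [habs]
    calc (1 / 2 : ℝ) ^ (p - 2) * (a - b) ^ p
        = (1 / 2 : ℝ) ^ (p - 2) * (a - b) ^ (p - 1) * (a - b) := by
          rw [mul_assoc, ← Real.rpow_add_one' hab (by linarith)]
          ring_nf
      _ ≤ _ := this
  · have hkey := key hp (show a - c ≤ b - c by linarith)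
    have hab : 0 ≤ b - a := by linarith
    have habs : |a - b| = b - a := by rw [abs_sub_comm, abs_of_nonneg hab]
    have hsub : (b - c) - (a - c) = b - a := by ring
    rw [hsub] at hkey
    have := mul_le_mul_of_nonneg_right hkey hab
    rw [habs]
    calc (1 / 2 : ℝ) ^ (p - 2) * (b - a) ^ p
        = (1 / 2 : ℝ) ^ (p - 2) * (b - a) ^ (p - 1) * (b - a) := by
          rw [mul_assoc, ← Real.rpow_add_one' hab (by linarith)]
          ring_nf
      _ ≤ (Real.sign (b - c) * |b - c| ^ (p - 1) - Real.sign (a - c) * |a - c| ^ (p - 1)) * (b - a) := this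
      _ = _ := by ring
end

section
/- Let S ⊆ ℝⁿ be convex, p ≥ 2 an integer with conjugate q (1/p + 1/q = 1), λ > 0, z ∈ ℝⁿ, h : ℝⁿ → ℝ convex, and g₁, g₂ ∈ ℝⁿ. Let xᵢ* be a minimizer over S of x ↦ gᵢᵀ(x − z) + (λ/2)‖x − z‖_p^p + h(x), i = 1, 2. Then (1/2)^p ‖x₁* − x₂*‖_p^p ≤ (1/(λ p))^q ‖g₁ − g₂‖_q^q. -/
open scoped RealInnerProductSpace

section Aux

open Filter Set Real

lemma hasDerivAt_abs_pow' {p : ℕ} (hp : 2 ≤ p) (s : ℝ) :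
    HasDerivAt (fun t : ℝ => |t| ^ p) ((p : ℝ) * |s| ^ (p - 2) * s) s := by
  rcases lt_trichotomy s 0 with hs | rfl | hs
  · have : HasDerivAt (fun t : ℝ => (-t) ^ p) ((p : ℝ) * |s| ^ (p - 2) * s) s := by
      have h1 : HasDerivAt (fun t : ℝ => (-t) ^ p) ((p : ℝ) * (-s) ^ (p - 1) * (-1)) s :=
        (hasDerivAt_pow p (-s)).comp s (hasDerivAt_neg s)
      convert h1 using 1
      have : (-s) ^ (p - 1) = (-s) ^ (p - 2) * (-s) := by
        rw [← pow_succ]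
        congr 1
        omega
      rw [this, abs_of_neg hs]
      ring
    refine this.congr_of_eventuallyEq ?_
    filter_upwards [eventually_lt_nhds hs] with t ht
    rw [abs_of_neg ht]
  · have : ((p:ℝ) * |(0:ℝ)| ^ (p - 2) * 0) = 0 := by ring
    rw [this]
    rw [hasDerivAt_iff_tendsto_slope]
    have hb : Tendsto (fun t : ℝ => |t| ^ (p - 1)) (nhdsWithin 0 {(0:ℝ)}ᶜ) (nhds 0) := by
      have : Tendsto (fun t : ℝ => |t| ^ (p - 1)) (nhds 0) (nhds (|(0:ℝ)| ^ (p-1))) :=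
        ((continuous_abs.pow (p-1)).tendsto 0)
      simp only [abs_zero, zero_pow (by omega : p - 1 ≠ 0)] at this
      exact this.mono_left nhdsWithin_le_nhds
    apply squeeze_zero_norm' _ hb
    filter_upwards [self_mem_nhdsWithin] with t ht
    simp only [Set.mem_compl_iff, Set.mem_singleton_iff] at ht
    have habs : |t| ≠ 0 := fun hc => ht (abs_eq_zero.mp hc)
    have hsl : slope (fun t : ℝ => |t| ^ p) 0 t = |t| ^ p / t := by
      rw [slope_def_field]
      rw [abs_zero, zero_pow (by omega : p ≠ 0), sub_zero, sub_zero]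
    rw [hsl, Real.norm_eq_abs, abs_div, abs_of_nonneg (pow_nonneg (abs_nonneg t) p)]
    have hstep : |t| ^ p = |t| ^ (p - 1) * |t| := by
      rw [← pow_succ]; congr 1; omega
    rw [hstep, mul_div_assoc, div_self habs, mul_one]
  · have : HasDerivAt (fun t : ℝ => t ^ p) ((p : ℝ) * |s| ^ (p - 2) * s) s := by
      have h1 : HasDerivAt (fun t : ℝ => t ^ p) ((p : ℝ) * s ^ (p - 1)) s := hasDerivAt_pow p s
      convert h1 using 1
      have : s ^ (p - 1) = s ^ (p - 2) * s := by
        rw [← pow_succ]; congr 1; omega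
      rw [this, abs_of_pos hs]; ring
    refine this.congr_of_eventuallyEq ?_
    filter_upwards [eventually_gt_nhds hs] with t ht
    rw [abs_of_pos ht]

lemma two_mul_add_pow_le' {x y : ℝ} (hx : 0 ≤ x) (hy : 0 ≤ y) (m : ℕ) :
    2 * (x + y) ^ m ≤ 2 ^ m * (x ^ m + y ^ m) := by
  induction m with
  | zero => norm_num
  | succ m ih =>
    have key : (x + y) * (x ^ m + y ^ m) ≤ 2 * (x ^ (m+1) + y ^ (m+1)) := by
      have hsg : 0 ≤ (x - y) * (x ^ m - y ^ m) := by
        rcases le_total x y with hxy | hxy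
        · have := pow_le_pow_left₀ hx hxy m
          nlinarith
        · have := pow_le_pow_left₀ hy hxy m
          nlinarith
      ring_nf
      ring_nf at hsg
      nlinarith
    calc 2 * (x + y) ^ (m + 1) = (x + y) * (2 * (x + y) ^ m) := by ring
      _ ≤ (x + y) * (2 ^ m * (x ^ m + y ^ m)) := by
          apply mul_le_mul_of_nonneg_left ih (by positivity)
      _ = 2 ^ m / 2 * ((x + y) * (x ^ m + y ^ m) * 2) := by ring
      _ ≤ 2 ^ m / 2 * (2 * (x ^ (m+1) + y ^ (m+1)) * 2) := by
          apply mul_le_mul_of_nonneg_left (by nlinarith) (by positivity)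
      _ = 2 ^ (m + 1) * (x ^ (m+1) + y ^ (m+1)) := by ring

lemma mono_pointwise' {p : ℕ} (hp : 2 ≤ p) (a b : ℝ) :
    |a - b| ^ p ≤ 2 ^ (p - 2) * ((|a| ^ (p-2) * a - |b| ^ (p-2) * b) * (a - b)) := by
  set A := |a| ^ (p - 2) with hA
  set B := |b| ^ (p - 2) with hB
  have hA0 : 0 ≤ A := pow_nonneg (abs_nonneg a) _
  have hB0 : 0 ≤ B := pow_nonneg (abs_nonneg b) _
  have hsign : 0 ≤ (A - B) * (a^2 - b^2) := by
    rcases le_total |a| |b| with hab | hab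
    · have h1 : A ≤ B := pow_le_pow_left₀ (abs_nonneg a) hab _
      have h2 : a^2 ≤ b^2 := by
        rw [← sq_abs a, ← sq_abs b]; exact pow_le_pow_left₀ (abs_nonneg a) hab 2
      nlinarith
    · have h1 : B ≤ A := pow_le_pow_left₀ (abs_nonneg b) hab _
      have h2 : b^2 ≤ a^2 := by
        rw [← sq_abs a, ← sq_abs b]; exact pow_le_pow_left₀ (abs_nonneg b) hab 2
      nlinarith
  have step1 : (1/2) * (A + B) * (a - b)^2 ≤ (A * a - B * b) * (a - b) := by nlinarith
  have step2 : |a - b| ^ p ≤ 2 ^ (p-2) * ((1/2) * (A + B) * (a - b)^2) := by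
    have e1 : |a - b| ^ p = |a - b| ^ (p - 2) * (a - b)^2 := by
      rw [← sq_abs (a - b), ← pow_add]
      congr 1
      omega
    have e2 : |a - b| ^ (p-2) ≤ (|a| + |b|) ^ (p-2) :=
      pow_le_pow_left₀ (abs_nonneg _) (abs_sub a b) _
    have e3 : 2 * (|a| + |b|) ^ (p-2) ≤ 2 ^ (p-2) * (A + B) :=
      two_mul_add_pow_le' (abs_nonneg a) (abs_nonneg b) (p-2)
    have h2 : (0:ℝ) ≤ (a-b)^2 := sq_nonneg _
    calc |a - b| ^ p = |a - b| ^ (p - 2) * (a - b)^2 := e1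
      _ ≤ (|a| + |b|) ^ (p-2) * (a - b)^2 := mul_le_mul_of_nonneg_right e2 h2
      _ ≤ ((1/2) * (2 ^ (p-2) * (A + B))) * (a - b)^2 := by
          apply mul_le_mul_of_nonneg_right _ h2
          linarith
      _ = 2 ^ (p-2) * ((1/2) * (A + B) * (a - b)^2) := by ring
  calc |a - b| ^ p ≤ 2 ^ (p-2) * ((1/2) * (A + B) * (a - b)^2) := step2
    _ ≤ 2 ^ (p-2) * ((A * a - B * b) * (a - b)) := by
        apply mul_le_mul_of_nonneg_left step1 (by positivity)

lemma varIneq' {n : ℕ} {S : Set (EuclideanSpace ℝ (Fin n))} (hS : Convex ℝ S)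
    {p : ℕ} (hp : 2 ≤ p) {lam : ℝ}
    (z g : EuclideanSpace ℝ (Fin n))
    {h : EuclideanSpace ℝ (Fin n) → ℝ} (hh : ConvexOn ℝ Set.univ h)
    {x y : EuclideanSpace ℝ (Fin n)} (hx : x ∈ S) (hy : y ∈ S)
    (hmin : IsMinOn (fun w => ⟪g, w - z⟫ + lam / 2 * (∑ i, |w i - z i| ^ p) + h w) S x) :
    0 ≤ ⟪g, y - x⟫ + lam / 2 * (∑ i, (p:ℝ) * |x i - z i| ^ (p-2) * (x i - z i) * (y i - x i))
        + (h y - h x) := by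
  set C : ℝ := ⟪g, y - x⟫ + (h y - h x) with hC
  set ψ : ℝ → ℝ := fun t => lam / 2 * (∑ i, |x i - z i + t * (y i - x i)| ^ p) + t * C with hψ
  set L : ℝ := lam / 2 * (∑ i, (p:ℝ) * |x i - z i| ^ (p-2) * (x i - z i) * (y i - x i)) + C with hL
  have hder : HasDerivAt ψ L 0 := by
    have hsum : HasDerivAt (fun t : ℝ => ∑ i, |x i - z i + t * (y i - x i)| ^ p)
        (∑ i, (p:ℝ) * |x i - z i| ^ (p-2) * (x i - z i) * (y i - x i)) 0 := by
      apply HasDerivAt.fun_sum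
      intro i _
      have haff : HasDerivAt (fun t : ℝ => x i - z i + t * (y i - x i)) (y i - x i) 0 := by
        simpa using ((hasDerivAt_id (0:ℝ)).mul_const (y i - x i)).const_add (x i - z i)
      have habs := (hasDerivAt_abs_pow' hp (x i - z i + 0 * (y i - x i))).comp 0 haff
      simp only [Function.comp_def, zero_mul, add_zero] at habs
      exact habs
    have hlin : HasDerivAt (fun t : ℝ => t * C) C 0 := by
      simpa using (hasDerivAt_id (0:ℝ)).mul_const C
    exact (hsum.const_mul (lam / 2)).add hlin
  have hmono : ∀ t ∈ Ioc (0:ℝ) 1, ψ 0 ≤ ψ t := by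
    intro t ht
    obtain ⟨ht0, ht1⟩ := ht
    have hmem : (1 - t) • x + t • y ∈ S := hS hx hy (by linarith) (le_of_lt ht0) (by ring)
    have hfle := hmin hmem
    simp only [Set.mem_setOf_eq] at hfle
    have hpt : ∀ i : Fin n, ((1 - t) • x + t • y - z) i = x i - z i + t * (y i - x i) := by
      intro i
      simp [PiLp.add_apply, PiLp.sub_apply, PiLp.smul_apply, smul_eq_mul]
      ring
    have hinner : ⟪g, (1 - t) • x + t • y - z⟫ = ⟪g, x - z⟫ + t * ⟪g, y - x⟫ := by
      have : (1 - t) • x + t • y - z = (x - z) + t • (y - x) := by module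
      rw [this, inner_add_right, real_inner_smul_right]
    have hconv : h ((1 - t) • x + t • y) ≤ (1 - t) * h x + t * h y :=
      hh.2 (Set.mem_univ x) (Set.mem_univ y) (by linarith) (le_of_lt ht0) (by ring)
    have hpt' : ∀ i : Fin n, ((1 - t) • x + t • y) i - z i = x i - z i + t * (y i - x i) := by
      intro i
      have := hpt i
      simpa [PiLp.sub_apply] using this
    have hsumeq : (∑ i, |((1 - t) • x + t • y) i - z i| ^ p)
        = ∑ i, |x i - z i + t * (y i - x i)| ^ p := by
      apply Finset.sum_congr rfl
      intro i _
      rw [hpt' i]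
    rw [hinner, hsumeq] at hfle
    have hz0 : (∑ i, |x i - z i + 0 * (y i - x i)| ^ p) = ∑ i, |x i - z i| ^ p := by
      apply Finset.sum_congr rfl; intro i _; norm_num
    simp only [hψ]
    rw [hz0, hC]
    nlinarith [hfle, hconv]
  have hslope : Tendsto (slope ψ 0) (nhdsWithin 0 (Ioi 0)) (nhds L) :=
    (hasDerivAt_iff_tendsto_slope.mp hder).mono_left (nhdsWithin_mono _ (fun t ht => by
      simp only [Set.mem_compl_iff, Set.mem_singleton_iff]
      exact ne_of_gt ht))
  have hLpos : 0 ≤ L := by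
    refine ge_of_tendsto hslope ?_
    filter_upwards [Ioc_mem_nhdsGT_of_mem (by constructor <;> norm_num : (0:ℝ) ∈ Ico (0:ℝ) 1)]
      with t ht
    rw [slope_def_field]
    have := hmono t ht
    have ht0 : 0 < t := ht.1
    apply div_nonneg (by linarith) (by linarith [ht0])
  rw [hL, hC] at hLpos
  linarith

lemma final_alg' {pr q lam D G : ℝ} (hpr : 2 ≤ pr) (hq : 1 < q) (hpq : 1/pr + 1/q = 1)
    (hlam : 0 < lam) (hD : 0 ≤ D) (hG : 0 ≤ G)
    (key : lam * pr / 2 * D ^ pr ≤ 2 ^ (pr - 1) / 2 * (D * G)) :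
    (1/2 : ℝ) ^ pr * D ^ pr ≤ (1/(lam*pr)) ^ q * G ^ q := by
  have hprpos : 0 < pr := by linarith
  have hqpos : 0 < q := by linarith
  have hpq' : (pr - 1) * q = pr := by
    field_simp at hpq
    nlinarith [hpq]
  rcases eq_or_lt_of_le hD with hD0 | hDpos
  · rw [← hD0, Real.zero_rpow (ne_of_gt hprpos)]
    have h1 : (0:ℝ) ≤ (1/(lam*pr)) ^ q := Real.rpow_nonneg (by positivity) q
    have h2 : (0:ℝ) ≤ G ^ q := Real.rpow_nonneg hG q
    nlinarith
  · have hstep : D ^ (pr - 1) ≤ 2 ^ (pr - 1) * G / (lam * pr) := by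
      have hDsplit : D ^ pr = D ^ (pr - 1) * D := by
        rw [← Real.rpow_add_one (ne_of_gt hDpos)]
        ring_nf
      rw [hDsplit] at key
      rw [le_div_iff₀ (by positivity : (0:ℝ) < lam * pr)]
      have h2p : (0:ℝ) < 2 ^ (pr - 1) := Real.rpow_pos_of_pos (by norm_num) _
      have := mul_le_mul_of_nonneg_left key (by norm_num : (0:ℝ) ≤ 2)
      have hcancel : lam * pr * (D ^ (pr-1) * D) ≤ 2 ^ (pr - 1) * (D * G) := by linarith
      have hD' : 0 ≤ D ^ (pr - 1) := Real.rpow_nonneg hD _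
      nlinarith [hcancel, hDpos]
    have hrq := Real.rpow_le_rpow (Real.rpow_nonneg hD _) hstep (le_of_lt hqpos)
    rw [← Real.rpow_mul hD, hpq'] at hrq
    have hrhs : (2 ^ (pr - 1) * G / (lam * pr)) ^ q
        = 2 ^ pr * G ^ q / (lam * pr) ^ q := by
      rw [Real.div_rpow (by positivity) (by positivity),
        Real.mul_rpow (by positivity) hG, ← Real.rpow_mul (by norm_num), hpq']
    rw [hrhs] at hrq
    have e1 : (1/2 : ℝ) ^ pr = 1 / 2 ^ pr := by
      rw [Real.div_rpow (by norm_num) (by norm_num), Real.one_rpow]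
    have e2 : (1/(lam*pr)) ^ q = 1 / (lam*pr) ^ q := by
      rw [Real.div_rpow (by norm_num) (by positivity), Real.one_rpow]
    rw [e1, e2]
    have h2p : (0:ℝ) < 2 ^ pr := Real.rpow_pos_of_pos (by norm_num) _
    have hlp : (0:ℝ) < (lam*pr) ^ q := Real.rpow_pos_of_pos (by positivity) _
    rw [div_mul_eq_mul_div, div_mul_eq_mul_div, one_mul, one_mul, div_le_div_iff₀ h2p hlp]
    calc D ^ pr * (lam*pr) ^ q ≤ (2 ^ pr * G ^ q / (lam * pr) ^ q) * (lam*pr) ^ q :=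
          mul_le_mul_of_nonneg_right hrq (le_of_lt hlp)
      _ = G ^ q * 2 ^ pr := by field_simp

lemma lp_pow_eq' {n : ℕ} {p : ℕ} (hp : 2 ≤ p) (v : EuclideanSpace ℝ (Fin n)) :
    lpNorm (p:ℝ) v ^ (p:ℝ) = ∑ i, |v i| ^ p := by
  unfold lpNorm
  have h0 : (0:ℝ) ≤ ∑ i, |v i| ^ (p:ℝ) :=
    Finset.sum_nonneg fun i _ => Real.rpow_nonneg (abs_nonneg _) _
  have hpne : (p:ℝ) ≠ 0 := by positivity
  rw [← Real.rpow_mul h0, one_div, inv_mul_cancel₀ hpne, Real.rpow_one]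
  exact Finset.sum_congr rfl fun i _ => Real.rpow_natCast _ _

end Aux

theorem stmt_7 {n : ℕ} {S : Set (EuclideanSpace ℝ (Fin n))}
    (hS : Convex ℝ S)
    {p : ℕ} (hp : 2 ≤ p) {q : ℝ} (hpq : 1 / (p : ℝ) + 1 / q = 1)
    {lam : ℝ} (hlam : 0 < lam)
    (z g₁ g₂ : EuclideanSpace ℝ (Fin n))
    {h : EuclideanSpace ℝ (Fin n) → ℝ} (hh : ConvexOn ℝ Set.univ h)
    {x₁ x₂ : EuclideanSpace ℝ (Fin n)} (hx₁ : x₁ ∈ S) (hx₂ : x₂ ∈ S)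
    (hmin₁ : IsMinOn (fun x => ⟪g₁, x - z⟫ + lam / 2 * lpNorm p (x - z) ^ (p : ℝ) + h x) S x₁)
    (hmin₂ : IsMinOn (fun x => ⟪g₂, x - z⟫ + lam / 2 * lpNorm p (x - z) ^ (p : ℝ) + h x) S x₂) :
    (1 / 2 : ℝ) ^ (p : ℝ) * lpNorm p (x₁ - x₂) ^ (p : ℝ)
      ≤ (1 / (lam * p)) ^ q * lpNorm q (g₁ - g₂) ^ q := by
  -- basic facts about p and q
  have hp1 : (2:ℝ) ≤ (p:ℝ) := by exact_mod_cast hp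
  have hppos : (0:ℝ) < p := by linarith
  have hinvp : 0 < 1/(p:ℝ) := by positivity
  have hinvp1 : 1/(p:ℝ) < 1 := by rw [div_lt_one hppos]; linarith
  have hq0 : 0 < q := by
    have h1 : 0 < 1/q := by linarith
    exact one_div_pos.mp h1
  have hq1 : 1 < q := by
    have h1 : 1/q < 1 := by linarith
    rw [div_lt_one hq0] at h1
    exact h1
  have hpq' : ((p:ℝ)).HolderConjugate q := Real.holderConjugate_iff.mpr ⟨by linarith, by rw [← one_div, ← one_div]; exact hpq⟩
  -- rewrite the objectives
  have hfun : ∀ g : EuclideanSpace ℝ (Fin n),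
      (fun x => ⟪g, x - z⟫ + lam / 2 * lpNorm p (x - z) ^ (p : ℝ) + h x)
      = (fun w => ⟪g, w - z⟫ + lam / 2 * (∑ i, |w i - z i| ^ p) + h w) := by
    intro g
    funext w
    rw [lp_pow_eq' hp (w - z)]
    simp [PiLp.sub_apply]
  rw [hfun g₁] at hmin₁
  rw [hfun g₂] at hmin₂
  -- variational inequalities
  have hv1 := varIneq' hS hp z g₁ hh hx₁ hx₂ hmin₁
  have hv2 := varIneq' hS hp z g₂ hh hx₂ hx₁ hmin₂
  -- inner product identities
  set I : ℝ := ⟪g₂ - g₁, x₁ - x₂⟫ with hI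
  have hIeq : ⟪g₁, x₂ - x₁⟫ + ⟪g₂, x₁ - x₂⟫ = I := by
    rw [hI, inner_sub_left]
    have : (x₂ - x₁ : EuclideanSpace ℝ (Fin n)) = -(x₁ - x₂) := by module
    rw [this, inner_neg_right]
    ring
  -- combine the two variational inequalities
  set M : ℝ := ∑ i, (|x₁ i - z i| ^ (p-2) * (x₁ i - z i) - |x₂ i - z i| ^ (p-2) * (x₂ i - z i))
      * (x₁ i - x₂ i) with hM
  have hMsum : (∑ i, (p:ℝ) * |x₁ i - z i| ^ (p-2) * (x₁ i - z i) * (x₂ i - x₁ i))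
      + (∑ i, (p:ℝ) * |x₂ i - z i| ^ (p-2) * (x₂ i - z i) * (x₁ i - x₂ i)) = -((p:ℝ) * M) := by
    rw [hM, Finset.mul_sum, ← Finset.sum_add_distrib, ← Finset.sum_neg_distrib]
    apply Finset.sum_congr rfl
    intro i _
    ring
  have hkey1 : lam / 2 * ((p:ℝ) * M) ≤ I := by
    have e : lam / 2 * (∑ i, (p:ℝ) * |x₁ i - z i| ^ (p-2) * (x₁ i - z i) * (x₂ i - x₁ i))
        + lam / 2 * (∑ i, (p:ℝ) * |x₂ i - z i| ^ (p-2) * (x₂ i - z i) * (x₁ i - x₂ i))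
        = -(lam / 2 * ((p:ℝ) * M)) := by
      rw [← mul_add, hMsum]
      ring
    linarith [hv1, hv2, hIeq, e]
  -- strong monotonicity
  set Dp : ℝ := ∑ i, |x₁ i - x₂ i| ^ p with hDp
  have hmonoSum : Dp ≤ 2 ^ (p-2) * M := by
    rw [hDp, hM, Finset.mul_sum]
    apply Finset.sum_le_sum
    intro i _
    have := mono_pointwise' hp (x₁ i - z i) (x₂ i - z i)
    have heq : x₁ i - z i - (x₂ i - z i) = x₁ i - x₂ i := by ring
    rw [heq] at this
    exact this
  have hDp0 : 0 ≤ Dp := Finset.sum_nonneg fun i _ => pow_nonneg (abs_nonneg _) _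
  -- Hölder
  set D : ℝ := lpNorm p (x₁ - x₂) with hD
  set G : ℝ := lpNorm q (g₁ - g₂) with hG
  have hD0 : 0 ≤ D := by
    rw [hD]; unfold lpNorm
    apply Real.rpow_nonneg
    exact Finset.sum_nonneg fun i _ => Real.rpow_nonneg (abs_nonneg _) _
  have hG0 : 0 ≤ G := by
    rw [hG]; unfold lpNorm
    apply Real.rpow_nonneg
    exact Finset.sum_nonneg fun i _ => Real.rpow_nonneg (abs_nonneg _) _
  have hHolder : I ≤ D * G := by
    have h1 : I = ∑ i, ((x₁ - x₂) i) * ((g₂ - g₁) i) := by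
      rw [hI]
      simp [PiLp.inner_apply, RCLike.inner_apply, conj_trivial, mul_comm]
    have h2 := Real.inner_le_Lp_mul_Lq (Finset.univ : Finset (Fin n))
      (fun i => (x₁ - x₂) i) (fun i => (g₂ - g₁) i) hpq'
    have h3 : ∑ i, |(fun i => (g₂ - g₁) i) i| ^ q = ∑ i, |(g₁ - g₂) i| ^ q := by
      apply Finset.sum_congr rfl
      intro i _
      have : |(g₂ - g₁) i| = |(g₁ - g₂) i| := by
        simp [PiLp.sub_apply, abs_sub_comm]
      rw [this]
    rw [h3] at h2
    rw [h1, hD, hG]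
    unfold lpNorm
    exact h2
  -- D ^ p = Dp
  have hDpow : D ^ (p:ℝ) = Dp := by
    rw [hD, lp_pow_eq' hp (x₁ - x₂), hDp]
    exact Finset.sum_congr rfl fun i _ => by simp [PiLp.sub_apply]
  -- assemble key inequality for final_alg'
  have h2p2 : (0:ℝ) ≤ 2 ^ (p-2 : ℕ) := by positivity
  have hkey2 : lam * (p:ℝ) / 2 * Dp ≤ 2 ^ (p-2:ℕ) * (D * G) := by
    have hpos2 : (0:ℝ) < 2 ^ (p-2:ℕ) := by positivity
    have hM0 : 0 ≤ M := by
      have h' : 2 ^ (p-2:ℕ) * (0:ℝ) ≤ 2 ^ (p-2:ℕ) * M := by rw [mul_zero]; linarith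
      exact le_of_mul_le_mul_left h' hpos2
    calc lam * (p:ℝ) / 2 * Dp ≤ lam * (p:ℝ) / 2 * (2 ^ (p-2:ℕ) * M) := by
          apply mul_le_mul_of_nonneg_left hmonoSum (by positivity)
      _ = 2 ^ (p-2:ℕ) * (lam / 2 * ((p:ℝ) * M)) := by ring
      _ ≤ 2 ^ (p-2:ℕ) * I := mul_le_mul_of_nonneg_left hkey1 h2p2
      _ ≤ 2 ^ (p-2:ℕ) * (D * G) := mul_le_mul_of_nonneg_left hHolder h2p2
  have hcast : (2:ℝ) ^ ((p:ℝ) - 1) / 2 = 2 ^ (p-2:ℕ) := by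
    have hc : ((p:ℝ) - 1) = ((p-2:ℕ):ℝ) + 1 := by
      rw [Nat.cast_sub hp]
      push_cast
      ring
    rw [hc, Real.rpow_add (by norm_num), Real.rpow_one, Real.rpow_natCast]
    ring
  have hkeyfin : lam * (p:ℝ) / 2 * D ^ (p:ℝ) ≤ 2 ^ ((p:ℝ) - 1) / 2 * (D * G) := by
    rw [hDpow, hcast]
    exact hkey2
  exact final_alg' hp1 hq1 hpq hlam hD0 hG0 hkeyfin
end

section
/- Let S ⊆ ℝⁿ be convex compact, f differentiable, h convex, γ > 0. Let x⁺ = argmin_{y∈S}{∇f(x)ᵀy + (1/(2γ))‖y − x‖₂² + h(y)} and P_S(x,γ) = (x − x⁺)/γ. If ∇f(x)ᵀ(y − x) + h(y) − h(x) ≥ −ε for all y ∈ S, then ‖P_S(x,γ)‖₂² ≤ ε/γ. -/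
open scoped RealInnerProductSpace

theorem stmt_11 {n : ℕ} {S : Set (EuclideanSpace ℝ (Fin n))}
    (hS : Convex ℝ S) (hScpt : IsCompact S)
    {f h : EuclideanSpace ℝ (Fin n) → ℝ} {g : EuclideanSpace ℝ (Fin n) → EuclideanSpace ℝ (Fin n)}
    (hf : ∀ x, HasGradientAt f (g x) x)
    (hh : ConvexOn ℝ Set.univ h)
    {gam : ℝ} (hgam : 0 < gam)
    {x xp : EuclideanSpace ℝ (Fin n)} (hx : x ∈ S) (hxp : xp ∈ S)
    (hmin : IsMinOn (fun y => ⟪g x, y⟫ + 1 / (2 * gam) * ‖y - x‖ ^ 2 + h y) S xp)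
    {eps : ℝ} (hstat : ∀ y ∈ S, ⟪g x, y - x⟫ + h y - h x ≥ -eps) :
    ‖gam⁻¹ • (x - xp)‖ ^ 2 ≤ eps / gam := by
  have key : ∀ t : ℝ, 0 < t → t ≤ 1 → (2 - t) * ‖x - xp‖ ^ 2 ≤ 2 * gam * eps := by
    intro t ht ht1
    rw [norm_sub_rev]
    set y := (1 - t) • xp + t • x with hy
    have hyS : y ∈ S := hS hxp hx (by linarith) ht.le (by ring)
    have hmin' := hmin hyS
    simp only [Set.mem_setOf_eq] at hmin'
    have h1 : ⟪g x, y⟫ = (1 - t) * ⟪g x, xp⟫ + t * ⟪g x, x⟫ := by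
      rw [hy, inner_add_right, real_inner_smul_right, real_inner_smul_right]
    have hsub : y - x = (1 - t) • (xp - x) := by
      rw [hy]; module
    have h2 : ‖y - x‖ ^ 2 = (1 - t) ^ 2 * ‖xp - x‖ ^ 2 := by
      rw [hsub, norm_smul, Real.norm_eq_abs, mul_pow, sq_abs]
    have h3 : h y ≤ (1 - t) * h xp + t * h x :=
      hh.2 (Set.mem_univ xp) (Set.mem_univ x) (by linarith) ht.le (by ring)
    have h4 := hstat xp hxp
    have h5 : ⟪g x, xp - x⟫ = ⟪g x, xp⟫ - ⟪g x, x⟫ := inner_sub_right _ _ _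
    rw [h5] at h4
    rw [h1, h2] at hmin'
    have hA : t * (-eps) ≤ t * (⟪g x, xp⟫ - ⟪g x, x⟫ + h xp - h x) :=
      mul_le_mul_of_nonneg_left (by linarith) ht.le
    have hkey2 : 1 / (2 * gam) * (t * (2 - t)) * ‖xp - x‖ ^ 2 ≤ t * eps := by
      nlinarith [hmin', h3, hA]
    have h2g : (0:ℝ) < 2 * gam := by positivity
    have hmul : t * (2 - t) * ‖xp - x‖ ^ 2 ≤ 2 * gam * (t * eps) := by
      calc t * (2 - t) * ‖xp - x‖ ^ 2
          = (2 * gam) * (1 / (2 * gam) * (t * (2 - t)) * ‖xp - x‖ ^ 2) := by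
            field_simp
        _ ≤ (2 * gam) * (t * eps) := mul_le_mul_of_nonneg_left hkey2 h2g.le
    rw [← mul_le_mul_iff_right₀ ht]
    nlinarith [hmul]
  have hmain : ‖x - xp‖ ^ 2 ≤ gam * eps := by
    by_contra hcon
    push_neg at hcon
    set c := ‖x - xp‖ ^ 2 with hc
    have hc0 : 0 ≤ c := by positivity
    have h1 := key 1 one_pos le_rfl
    have hce : gam * eps < c := hcon
    have hcpos : 0 < c := by nlinarith
    have htpos : 0 < (c - gam * eps) / c := div_pos (by linarith) hcpos
    have htle : (c - gam * eps) / c ≤ 1 := by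
      rw [div_le_one hcpos]; nlinarith
    have h2 := key _ htpos htle
    have : (2 - (c - gam * eps) / c) * c = 2 * c - (c - gam * eps) := by
      field_simp
    nlinarith [h2, this]
  have hnorm : ‖gam⁻¹ • (x - xp)‖ ^ 2 = gam⁻¹ ^ 2 * ‖x - xp‖ ^ 2 := by
    rw [norm_smul, Real.norm_eq_abs, abs_of_pos (inv_pos.2 hgam), mul_pow]
  rw [hnorm]
  have : gam⁻¹ ^ 2 * ‖x - xp‖ ^ 2 ≤ gam⁻¹ ^ 2 * (gam * eps) :=
    mul_le_mul_of_nonneg_left hmain (by positivity)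
  have heq : gam⁻¹ ^ 2 * (gam * eps) = eps / gam := by
    field_simp
  linarith [this, heq.le, heq.ge]
end

section
/- Let S ⊆ ℝⁿ be convex compact, f differentiable with continuous gradient, h convex, γ > 0. With x⁺ and P_S(x,γ) as above, if ‖P_S(x,γ)‖₂² ≤ ε, then for all y ∈ S, ∇f(x)ᵀ(y − x) + h(y) − h(x) ≥ −(γτ + γς + diam₂(S))√ε, where τ = max_{x∈S}‖∇f(x)‖₂, ς = max_{x∈S} min_{z∈∂h(x)}‖z‖₂, and diam₂(S) = max_{x,y∈S}‖x−y‖₂. -/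
open scoped RealInnerProductSpace

theorem stmt_12 {n : ℕ} {S : Set (EuclideanSpace ℝ (Fin n))}
    (hS : Convex ℝ S) (hScpt : IsCompact S)
    {f h : EuclideanSpace ℝ (Fin n) → ℝ} {g : EuclideanSpace ℝ (Fin n) → EuclideanSpace ℝ (Fin n)}
    (hf : ∀ x, HasGradientAt f (g x) x) (hg : Continuous g)
    (hh : ConvexOn ℝ Set.univ h)
    {gam : ℝ} (hgam : 0 < gam)
    {tau sig D : ℝ}
    (htau : ∀ w ∈ S, ‖g w‖ ≤ tau)
    (hsig : ∀ w ∈ S, ∃ s : EuclideanSpace ℝ (Fin n),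
      (∀ y, h y ≥ h w + ⟪s, y - w⟫) ∧ ‖s‖ ≤ sig)
    (hD : ∀ u ∈ S, ∀ v ∈ S, ‖u - v‖ ≤ D)
    {x xp : EuclideanSpace ℝ (Fin n)} (hx : x ∈ S) (hxp : xp ∈ S)
    (hmin : IsMinOn (fun y => ⟪g x, y⟫ + 1 / (2 * gam) * ‖y - x‖ ^ 2 + h y) S xp)
    {eps : ℝ} (heps : 0 ≤ eps)
    (hres : ‖gam⁻¹ • (x - xp)‖ ^ 2 ≤ eps) :
    ∀ y ∈ S, ⟪g x, y - x⟫ + h y - h x ≥ -(gam * tau + gam * sig + D) * Real.sqrt eps := by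
  intro y hy
  have hgamne : gam ≠ 0 := ne_of_gt hgam
  -- step 1 : ‖xp - x‖ ≤ gam * sqrt eps
  have h1 : ‖gam⁻¹ • (x - xp)‖ ≤ Real.sqrt eps := by
    have := Real.sqrt_le_sqrt hres
    rwa [Real.sqrt_sq (norm_nonneg _)] at this
  have hnorm : ‖xp - x‖ ≤ gam * Real.sqrt eps := by
    rw [norm_sub_rev]
    have h2 : ‖x - xp‖ = gam * ‖gam⁻¹ • (x - xp)‖ := by
      rw [norm_smul, Real.norm_eq_abs, abs_inv, abs_of_pos hgam]
      field_simp
    rw [h2]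
    exact mul_le_mul_of_nonneg_left h1 hgam.le
  -- step 2 : variational inequality
  set A : ℝ := ⟪g x, y - xp⟫ + (1 / gam) * ⟪xp - x, y - xp⟫ + h y - h xp with hA
  set B : ℝ := 1 / (2 * gam) * ‖y - xp‖ ^ 2 with hB
  have hBnn : 0 ≤ B := by rw [hB]; positivity
  clear_value A B
  have key : ∀ t : ℝ, 0 < t → t ≤ 1 → 0 ≤ t * A + t ^ 2 * B := by
    intro t ht0 ht1
    have hz : xp + t • (y - xp) = (1 - t) • xp + t • y := by module
    have hzS : xp + t • (y - xp) ∈ S := by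
      rw [hz]; exact hS hxp hy (by linarith) ht0.le (by ring)
    have hmin' := hmin hzS
    simp only [Set.mem_setOf_eq] at hmin'
    have hconv : h (xp + t • (y - xp)) ≤ (1 - t) * h xp + t * h y := by
      rw [hz]
      have := hh.2 (Set.mem_univ xp) (Set.mem_univ y) (by linarith : (0:ℝ) ≤ 1 - t)
        ht0.le (by ring)
      simpa using this
    have hin : ⟪g x, xp + t • (y - xp)⟫ = ⟪g x, xp⟫ + t * ⟪g x, y - xp⟫ := by
      rw [inner_add_right, real_inner_smul_right]
    have hnsq : ‖xp + t • (y - xp) - x‖ ^ 2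
        = ‖xp - x‖ ^ 2 + 2 * (t * ⟪xp - x, y - xp⟫) + t ^ 2 * ‖y - xp‖ ^ 2 := by
      have e : xp + t • (y - xp) - x = (xp - x) + t • (y - xp) := by abel
      rw [e, norm_add_sq_real, real_inner_smul_right, norm_smul, Real.norm_eq_abs,
        mul_pow, sq_abs]
    rw [hin, hnsq] at hmin'
    have expand : ⟪g x, xp⟫ + t * ⟪g x, y - xp⟫
        + 1 / (2 * gam) * (‖xp - x‖ ^ 2 + 2 * (t * ⟪xp - x, y - xp⟫) + t ^ 2 * ‖y - xp‖ ^ 2)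
        + ((1 - t) * h xp + t * h y)
        = (⟪g x, xp⟫ + 1 / (2 * gam) * ‖xp - x‖ ^ 2 + h xp) + (t * A + t ^ 2 * B) := by
      rw [hA, hB]; field_simp; ring
    linarith [hmin', hconv, expand]
  have hVI : 0 ≤ A := by
    by_contra hneg
    push_neg at hneg
    set B' : ℝ := B + 1 with hB'
    have hB'pos : 0 < B' := by linarith
    have hdiv : 0 < -A / (2 * B') := div_pos (by linarith) (by linarith)
    have ht0 : 0 < min 1 (-A / (2 * B')) := lt_min one_pos hdiv
    have h1' := key _ ht0 (min_le_left _ _)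
    have htB : min 1 (-A / (2 * B')) * B ≤ -A / 2 := by
      calc min 1 (-A / (2 * B')) * B ≤ (-A / (2 * B')) * B' := by
            apply mul_le_mul (min_le_right _ _) (by linarith) hBnn hdiv.le
        _ = -A / 2 := by field_simp
    nlinarith [mul_le_mul_of_nonneg_left htB ht0.le, mul_pos ht0 (neg_pos.mpr hneg)]
  -- step 3 : assemble
  obtain ⟨s, hs1, hs2⟩ := hsig x hx
  have hDnn : 0 ≤ D := le_trans (norm_nonneg _) (hD x hx x hx)
  have htaunn : 0 ≤ tau := le_trans (norm_nonneg _) (htau x hx)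
  have hsignn : 0 ≤ sig := le_trans (norm_nonneg _) hs2
  have hsqnn : 0 ≤ Real.sqrt eps := Real.sqrt_nonneg _
  -- bound (1/gam) * ⟪xp - x, y - xp⟫ ≤ D * sqrt eps
  have c1 : ⟪xp - x, y - xp⟫ ≤ ‖xp - x‖ * ‖y - xp‖ := real_inner_le_norm _ _
  have c2 : ‖xp - x‖ * ‖y - xp‖ ≤ (gam * Real.sqrt eps) * D :=
    mul_le_mul hnorm (hD y hy xp hxp) (norm_nonneg _) (by positivity)
  have c3 : (1 / gam) * ⟪xp - x, y - xp⟫ ≤ D * Real.sqrt eps := by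
    have := mul_le_mul_of_nonneg_left (c1.trans c2) (by positivity : (0:ℝ) ≤ 1 / gam)
    calc (1 / gam) * ⟪xp - x, y - xp⟫ ≤ (1 / gam) * ((gam * Real.sqrt eps) * D) := this
      _ = D * Real.sqrt eps := by field_simp
  -- bound ⟪g x, xp - x⟫ ≥ -(tau * (gam * sqrt eps))
  have c4 : -(tau * (gam * Real.sqrt eps)) ≤ ⟪g x, xp - x⟫ := by
    have habs := abs_real_inner_le_norm (g x) (xp - x)
    have hb : ‖g x‖ * ‖xp - x‖ ≤ tau * (gam * Real.sqrt eps) :=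
      mul_le_mul (htau x hx) hnorm (norm_nonneg _) htaunn
    have := (abs_le.1 habs).1
    linarith
  -- bound h xp - h x ≥ -(sig * (gam * sqrt eps))
  have c5 : -(sig * (gam * Real.sqrt eps)) ≤ h xp - h x := by
    have hsub := hs1 xp
    have habs := abs_real_inner_le_norm s (xp - x)
    have hb : ‖s‖ * ‖xp - x‖ ≤ sig * (gam * Real.sqrt eps) :=
      mul_le_mul hs2 hnorm (norm_nonneg _) hsignn
    have := (abs_le.1 habs).1
    linarith
  -- split the inner product
  have hsplit : ⟪g x, y - x⟫ = ⟪g x, y - xp⟫ + ⟪g x, xp - x⟫ := by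
    rw [← inner_add_right]
    congr 1
    abel
  rw [hsplit]
  have : ⟪g x, y - xp⟫ + h y - h xp ≥ -(D * Real.sqrt eps) := by
    rw [hA] at hVI; linarith
  linarith
end

section
/- Suppose f satisfies f(y) ≤ f(x) + ∇f(x)ᵀ(y−x) + (λ/2)‖y−x‖_p^p on a convex compact set S (p > 1, conjugate q), h convex, Φ = f + h with minimum value Φ* over S. Let {x^k} be generated by x^{k+1} = argmin_{y∈S}{∇f(x^k)ᵀ(y−x^k) + (λ/2)‖y−x^k‖_p^p + h(y)}. Then for any N ≥ 1, min_{1≤k≤N} ΔU_k ≤ (Φ(x¹) − Φ*)/N, where ΔU_k = −∇f(x^k)ᵀ(x^{k+1}−x^k) − (λ/2)‖x^{k+1}−x^k‖_p^p + h(x^k) − h(x^{k+1}). -/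
open scoped RealInnerProductSpace

lemma lpNorm_zero {n : ℕ} {p : ℝ} (hp : 0 < p) : lpNorm p (0 : EuclideanSpace ℝ (Fin n)) = 0 := by
  unfold lpNorm
  have : ∀ i : Fin n, |(0 : EuclideanSpace ℝ (Fin n)) i| ^ p = 0 := by
    intro i
    simp [Real.zero_rpow hp.ne']
  rw [Finset.sum_congr rfl (fun i _ => this i), Finset.sum_const, smul_zero]
  exact Real.zero_rpow (by positivity)

theorem stmt_14 {n : ℕ} {S : Set (EuclideanSpace ℝ (Fin n))}
    (hS : Convex ℝ S) (hScpt : IsCompact S)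
    {f h : EuclideanSpace ℝ (Fin n) → ℝ} {g : EuclideanSpace ℝ (Fin n) → EuclideanSpace ℝ (Fin n)}
    (hf : ∀ x, HasGradientAt f (g x) x)
    (hh : ConvexOn ℝ Set.univ h)
    {p q lam : ℝ} (hp : 1 < p) (hpq : 1 / p + 1 / q = 1) (hlam : 0 < lam)
    (hdescent : ∀ x ∈ S, ∀ y ∈ S,
      f y ≤ f x + ⟪g x, y - x⟫ + lam / 2 * lpNorm p (y - x) ^ p)
    {Φstar : ℝ} (hstar : IsLeast ((fun y => f y + h y) '' S) Φstar)
    {x : ℕ → EuclideanSpace ℝ (Fin n)} (hx1 : x 1 ∈ S)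
    (hiter : ∀ k ≥ 1, x (k + 1) ∈ S ∧
      IsMinOn (fun y => ⟪g (x k), y - x k⟫ + lam / 2 * lpNorm p (y - x k) ^ p + h y) S (x (k + 1))) :
    ∀ N : ℕ, 1 ≤ N → ∃ k, 1 ≤ k ∧ k ≤ N ∧
      -⟪g (x k), x (k + 1) - x k⟫ - lam / 2 * lpNorm p (x (k + 1) - x k) ^ p
          + h (x k) - h (x (k + 1))
        ≤ ((f (x 1) + h (x 1)) - Φstar) / N := by
  intro N hN
  set ΔU : ℕ → ℝ := fun k =>
    -⟪g (x k), x (k + 1) - x k⟫ - lam / 2 * lpNorm p (x (k + 1) - x k) ^ p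
      + h (x k) - h (x (k + 1)) with hΔU
  -- membership
  have hmem : ∀ k, 1 ≤ k → x k ∈ S := by
    intro k hk
    induction k with
    | zero => omega
    | succ m ih =>
      rcases Nat.eq_or_lt_of_le hk with h1 | h1
      · simpa [← h1] using hx1
      · exact (hiter m (by omega)).1
  -- one-step decrease
  have hstep : ∀ k, 1 ≤ k → f (x (k+1)) + h (x (k+1)) ≤ f (x k) + h (x k) - ΔU k := by
    intro k hk
    have hd := hdescent (x k) (hmem k hk) (x (k+1)) (hmem (k+1) (by omega))
    simp only [hΔU]
    linarith
  -- telescoping sum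
  have hsum : ∀ M : ℕ, ∑ k ∈ Finset.Icc 1 M, ΔU k
      ≤ (f (x 1) + h (x 1)) - (f (x (M+1)) + h (x (M+1))) := by
    intro M
    induction M with
    | zero => simp
    | succ m ih =>
      rw [Finset.sum_Icc_succ_top (by omega : 1 ≤ m + 1)]
      have := hstep (m+1) (by omega)
      linarith
  -- nonnegativity of ΔU
  have hpos : ∀ k, 1 ≤ k → 0 ≤ ΔU k := by
    intro k hk
    have hmin := (hiter k hk).2 (hmem k hk)
    simp only [Set.mem_setOf_eq, sub_self, lpNorm_zero (by linarith : (0:ℝ) < p), inner_zero_right,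
      Real.zero_rpow (by linarith : p ≠ 0), mul_zero, add_zero, zero_add] at hmin
    simp only [hΔU]
    linarith [hmin]
  -- pick the min
  obtain ⟨k0, hk0mem, hk0min⟩ := Finset.exists_min_image (Finset.Icc 1 N) ΔU
    ⟨1, Finset.mem_Icc.mpr ⟨le_refl 1, hN⟩⟩
  rw [Finset.mem_Icc] at hk0mem
  refine ⟨k0, hk0mem.1, hk0mem.2, ?_⟩
  have hcard : (N : ℝ) * ΔU k0 ≤ ∑ k ∈ Finset.Icc 1 N, ΔU k := by
    have := Finset.card_nsmul_le_sum (Finset.Icc 1 N) ΔU (ΔU k0) (fun i hi => hk0min i hi)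
    simpa [Nat.card_Icc, nsmul_eq_mul] using this
  have hlb : Φstar ≤ f (x (N+1)) + h (x (N+1)) :=
    hstar.2 ⟨x (N+1), hmem (N+1) (by omega), rfl⟩
  have hNpos : (0:ℝ) < N := by exact_mod_cast hN
  rw [le_div_iff₀ hNpos]
  have := hsum N
  show ΔU k0 * N ≤ _
  nlinarith [hcard, this, hlb]
end

section
/- (Smoothing approximation error bound.) Let h : ℝⁿ → ℝ be concave, S compact convex, r > 0, and suppose every subgradient g ∈ ∂h(x) for x ∈ S + B₂(0,r) satisfies ‖g‖₂ ≤ M. Define h_r(x) = E[h(x + rξ)] where ξ is uniformly distributed on the unit Euclidean ball. If x* minimizes f + h over S and x̃ minimizes f + h_r over S, then f(x̃) + h(x̃) ≤ f(x*) + h(x*) + M r. -/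
open scoped RealInnerProductSpace
open MeasureTheory Pointwise

private lemma exists_supergrad {n : ℕ} {h : EuclideanSpace ℝ (Fin n) → ℝ}
    (hh : ConcaveOn ℝ Set.univ h) (hc : Continuous h) (x : EuclideanSpace ℝ (Fin n)) :
    ∃ s : EuclideanSpace ℝ (Fin n), ∀ y, h y ≤ h x + ⟪s, y - x⟫ := by
  classical
  set A : Set (EuclideanSpace ℝ (Fin n) × ℝ) := {p | p.2 < h p.1} with hA
  have hAconv : Convex ℝ A := by
    rintro ⟨p1, p2⟩ hp ⟨q1, q2⟩ hq a b ha hb hab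
    simp only [hA, Set.mem_setOf_eq] at hp hq ⊢
    have hcc := hh.2 (Set.mem_univ p1) (Set.mem_univ q1) ha hb hab
    have hlt : a * p2 + b * q2 < a * h p1 + b * h q1 := by
      rcases lt_or_eq_of_le ha with ha' | ha'
      · have h1 : a * p2 < a * h p1 := by nlinarith
        have h2 : b * q2 ≤ b * h q1 := by nlinarith
        linarith
      · have hb1 : b = 1 := by linarith
        rw [← ha', hb1]; simpa using hq
    calc (a • ((p1, p2) : EuclideanSpace ℝ (Fin n) × ℝ) + b • ((q1, q2) : EuclideanSpace ℝ (Fin n) × ℝ)).2 = a * p2 + b * q2 := rfl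
      _ < a * h p1 + b * h q1 := hlt
      _ ≤ h (a • p1 + b • q1) := by simpa [smul_eq_mul] using hcc
      _ = h ((a • ((p1, p2) : EuclideanSpace ℝ (Fin n) × ℝ) + b • ((q1, q2) : EuclideanSpace ℝ (Fin n) × ℝ)).1) := rfl
  have hAopen : IsOpen A := isOpen_lt continuous_snd (hc.comp continuous_fst)
  have hdisj : ((x, h x) : EuclideanSpace ℝ (Fin n) × ℝ) ∉ A := by simp [hA]
  obtain ⟨f, hf⟩ := geometric_hahn_banach_point_open hAconv hAopen hdisj
  set c : ℝ := f ((0 : EuclideanSpace ℝ (Fin n)), (1 : ℝ)) with hcdef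
  set ℓ : EuclideanSpace ℝ (Fin n) →L[ℝ] ℝ := f.comp (ContinuousLinearMap.inl ℝ (EuclideanSpace ℝ (Fin n)) ℝ) with hldef
  have hsplit : ∀ (y : EuclideanSpace ℝ (Fin n)) (t : ℝ), f (y, t) = ℓ y + t * c := by
    intro y t
    have hyt : ((y, t) : EuclideanSpace ℝ (Fin n) × ℝ) = (y, (0 : ℝ)) + t • ((0 : EuclideanSpace ℝ (Fin n)), (1 : ℝ)) := by
      simp [Prod.ext_iff]
    rw [hyt, map_add, ContinuousLinearMap.map_smul]
    simp [hldef, hcdef, smul_eq_mul, ContinuousLinearMap.comp_apply]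
  have hkey : ∀ y : EuclideanSpace ℝ (Fin n), ∀ t : ℝ, t < h y → ℓ x + h x * c < ℓ y + t * c := by
    intro y t ht
    have := hf (y, t) ht
    rwa [hsplit, hsplit] at this
  have hcneg : c < 0 := by
    have := hkey x (h x - 1) (by linarith)
    nlinarith
  have hle : ∀ y : EuclideanSpace ℝ (Fin n), ℓ x + h x * c ≤ ℓ y + h y * c := by
    intro y
    by_contra hcon
    push_neg at hcon
    set δ : ℝ := (ℓ x + h x * c) - (ℓ y + h y * c) with hδ
    have hδpos : 0 < δ := by simp only [hδ]; linarith
    have hc2 : 0 < -2 * c := by linarith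
    have hε : 0 < δ / (-2 * c) := div_pos hδpos hc2
    have hεc' : ∀ d : ℝ, d / (-2 * c) * c = -(d / 2) := by
      intro d
      have hc0 : c ≠ 0 := hcneg.ne
      field_simp
    have hεc : δ / (-2 * c) * c = -(δ / 2) := hεc' δ
    have hk := hkey y (h y - δ / (-2 * c)) (by linarith)
    rw [sub_mul, hεc] at hk
    simp only [hδ] at hk
    linarith
  refine ⟨(InnerProductSpace.toDual ℝ (EuclideanSpace ℝ (Fin n))).symm ((-c⁻¹) • (ℓ : EuclideanSpace ℝ (Fin n) →L[ℝ] ℝ)), fun y => ?_⟩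
  have hinner : ⟪(InnerProductSpace.toDual ℝ (EuclideanSpace ℝ (Fin n))).symm ((-c⁻¹) • (ℓ : EuclideanSpace ℝ (Fin n) →L[ℝ] ℝ)), y - x⟫
      = (-c⁻¹) * (ℓ y - ℓ x) := by
    rw [InnerProductSpace.toDual_symm_apply]
    simp [map_sub, smul_eq_mul]
    ring
  rw [hinner]
  have hc0 : c ≠ 0 := hcneg.ne
  have hinv : c⁻¹ < 0 := inv_lt_zero.mpr hcneg
  have h3 := mul_le_mul_of_nonpos_right (hle y) hinv.le
  have e : ∀ a b : ℝ, (a + b * c) * c⁻¹ = a * c⁻¹ + b := by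
    intro a b
    field_simp
  rw [e, e] at h3
  have egoal : -c⁻¹ * (ℓ y - ℓ x) = ℓ x * c⁻¹ - ℓ y * c⁻¹ := by ring
  rw [egoal]
  linarith

theorem stmt_18 {n : ℕ} {S : Set (EuclideanSpace ℝ (Fin n))}
    (hS : Convex ℝ S) (hScpt : IsCompact S)
    {f h : EuclideanSpace ℝ (Fin n) → ℝ}
    (hh : ConcaveOn ℝ Set.univ h)
    {r M : ℝ} (hr : 0 < r)
    (hM : ∀ x ∈ S + Metric.closedBall (0 : EuclideanSpace ℝ (Fin n)) r,
      ∀ s : EuclideanSpace ℝ (Fin n),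
        (∀ y, h y ≤ h x + ⟪s, y - x⟫) → ‖s‖ ≤ M)
    {xstar xtil : EuclideanSpace ℝ (Fin n)} (hxstar : xstar ∈ S) (hxtil : xtil ∈ S)
    (hminstar : IsMinOn (fun x => f x + h x) S xstar)
    (hmintil : IsMinOn
      (fun x => f x + ⨍ ξ in Metric.ball (0 : EuclideanSpace ℝ (Fin n)) 1, h (x + r • ξ)) S xtil) :
    f xtil + h xtil ≤ f xstar + h xstar + M * r := by
  classical
  have hcont : Continuous h := by
    have := hh.continuousOn isOpen_univ
    rwa [continuousOn_univ] at this
  set B : Set (EuclideanSpace ℝ (Fin n)) := Metric.ball (0 : EuclideanSpace ℝ (Fin n)) 1 with hB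
  have hBmeas : MeasurableSet B := measurableSet_ball
  have hvolpos : 0 < volume B := Metric.measure_ball_pos volume 0 one_pos
  have hvolfin : volume B < ⊤ := measure_ball_lt_top
  set V : ℝ := (volume B).toReal with hV
  have hVpos : 0 < V := ENNReal.toReal_pos hvolpos.ne' hvolfin.ne
  -- integrability facts
  have hint_id : IntegrableOn (fun ξ : EuclideanSpace ℝ (Fin n) => ξ) B volume :=
    ((continuous_id.continuousOn).integrableOn_compact (isCompact_closedBall (0 : EuclideanSpace ℝ (Fin n)) 1)).mono_set
      Metric.ball_subset_closedBall
  have hint : ∀ x : EuclideanSpace ℝ (Fin n), IntegrableOn (fun ξ : EuclideanSpace ℝ (Fin n) => h (x + r • ξ)) B volume := by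
    intro x
    have hcc : Continuous fun ξ : EuclideanSpace ℝ (Fin n) => h (x + r • ξ) :=
      hcont.comp (continuous_const.add (continuous_id.const_smul r))
    exact (hcc.continuousOn.integrableOn_compact (isCompact_closedBall (0 : EuclideanSpace ℝ (Fin n)) 1)).mono_set
      Metric.ball_subset_closedBall
  have hconst_int : ∀ a : ℝ, IntegrableOn (fun _ : EuclideanSpace ℝ (Fin n) => a) B volume := fun a =>
    integrableOn_const hvolfin.ne
  -- the center of mass of the unit ball is 0
  have hzero : (∫ ξ in B, ξ) = (0 : EuclideanSpace ℝ (Fin n)) := by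
    have hneg : (fun ξ : EuclideanSpace ℝ (Fin n) => Set.indicator B (fun z : EuclideanSpace ℝ (Fin n) => z) (-ξ))
        = fun ξ : EuclideanSpace ℝ (Fin n) => - Set.indicator B (fun z : EuclideanSpace ℝ (Fin n) => z) ξ := by
      funext ξ
      by_cases hξ : ξ ∈ B
      · have hξ' : -ξ ∈ B := by
          simpa [hB, mem_ball_zero_iff, norm_neg] using hξ
        simp [Set.indicator_of_mem hξ, Set.indicator_of_mem hξ']
      · have hξ' : -ξ ∉ B := by
          simpa [hB, mem_ball_zero_iff, norm_neg] using hξ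
        simp [Set.indicator_of_notMem hξ, Set.indicator_of_notMem hξ']
    have h2 : (∫ ξ, Set.indicator B (fun z : EuclideanSpace ℝ (Fin n) => z) (-ξ))
        = ∫ ξ, Set.indicator B (fun z : EuclideanSpace ℝ (Fin n) => z) ξ :=
      integral_neg_eq_self _ _
    rw [hneg, integral_neg] at h2
    have hI : (∫ ξ, Set.indicator B (fun z : EuclideanSpace ℝ (Fin n) => z) ξ) = 0 := by
      have h2I : (2 : ℝ) • (∫ ξ, Set.indicator B (fun z : EuclideanSpace ℝ (Fin n) => z) ξ) = 0 := by
        rw [two_smul]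
        nth_rewrite 1 [← h2]
        exact neg_add_cancel _
      have := smul_eq_zero.mp h2I
      simpa using this
    rw [← integral_indicator hBmeas]
    exact hI
  -- Step A : the smoothed function is below h
  have stepA : ∀ x : EuclideanSpace ℝ (Fin n), (⨍ ξ in B, h (x + r • ξ)) ≤ h x := by
    intro x
    obtain ⟨s, hs⟩ := exists_supergrad hh hcont x
    have hpt : ∀ ξ ∈ B, h (x + r • ξ) ≤ h x + ⟪s, r • ξ⟫ := by
      intro ξ _
      have hsx := hs (x + r • ξ)
      rwa [add_sub_cancel_left] at hsx
    have hids : IntegrableOn (fun ξ : EuclideanSpace ℝ (Fin n) => r • ξ) B volume := hint_id.smul r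
    have hinner_int : IntegrableOn (fun ξ : EuclideanSpace ℝ (Fin n) => ⟪s, r • ξ⟫) B volume :=
      hids.const_inner s
    have hlin_int : IntegrableOn (fun ξ : EuclideanSpace ℝ (Fin n) => h x + ⟪s, r • ξ⟫) B volume :=
      (hconst_int (h x)).add hinner_int
    have hIle : (∫ ξ in B, h (x + r • ξ)) ≤ ∫ ξ in B, (h x + ⟪s, r • ξ⟫) :=
      setIntegral_mono_on (hint x) hlin_int hBmeas hpt
    have hRHS : (∫ ξ in B, (h x + ⟪s, r • ξ⟫)) = V * h x := by
      rw [integral_add (hconst_int (h x)) hinner_int, setIntegral_const,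
        integral_inner hids s, integral_smul, hzero, smul_zero, inner_zero_right]
      simp [smul_eq_mul]
      exact Or.inl rfl
    have hfin : (∫ ξ in B, h (x + r • ξ)) ≤ V * h x := by rw [← hRHS]; exact hIle
    rw [setAverage_eq]
    have hnn : (0 : ℝ) ≤ V⁻¹ := inv_nonneg.mpr hVpos.le
    calc (volume B).toReal⁻¹ • (∫ ξ in B, h (x + r • ξ))
        = V⁻¹ * (∫ ξ in B, h (x + r • ξ)) := by rw [smul_eq_mul]
      _ ≤ V⁻¹ * (V * h x) := mul_le_mul_of_nonneg_left hfin hnn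
      _ = h x := by field_simp
  -- Step B : h is below the smoothed function plus M * r
  have stepB : h xtil ≤ (⨍ ξ in B, h (xtil + r • ξ)) + M * r := by
    have hpt : ∀ ξ ∈ B, h xtil ≤ h (xtil + r • ξ) + M * r := by
      intro ξ hξ
      obtain ⟨s, hs⟩ := exists_supergrad hh hcont (xtil + r • ξ)
      have hnormξ : ‖ξ‖ < 1 := mem_ball_zero_iff.mp hξ
      have hnorm : ‖r • ξ‖ ≤ r := by
        rw [norm_smul, Real.norm_eq_abs, abs_of_pos hr]
        nlinarith [norm_nonneg ξ]
      have hmem : xtil + r • ξ ∈ S + Metric.closedBall (0 : EuclideanSpace ℝ (Fin n)) r :=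
        Set.add_mem_add hxtil (by simpa [mem_closedBall_zero_iff] using hnorm)
      have hsM : ‖s‖ ≤ M := hM _ hmem s hs
      have h0M : 0 ≤ M := le_trans (norm_nonneg s) hsM
      have hxx : xtil - (xtil + r • ξ) = -(r • ξ) := by abel
      have hineq := hs xtil
      rw [hxx] at hineq
      have hbd : ⟪s, -(r • ξ)⟫ ≤ M * r := by
        calc ⟪s, -(r • ξ)⟫ ≤ ‖s‖ * ‖-(r • ξ)‖ := real_inner_le_norm _ _
          _ = ‖s‖ * ‖r • ξ‖ := by rw [norm_neg]
          _ ≤ M * r := mul_le_mul hsM hnorm (norm_nonneg _) h0M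
      linarith
    have hsum_int : IntegrableOn (fun ξ : EuclideanSpace ℝ (Fin n) => h (xtil + r • ξ) + M * r) B volume :=
      (hint xtil).add (hconst_int (M * r))
    have h1 : (∫ ξ in B, (h xtil : ℝ)) ≤ ∫ ξ in B, (h (xtil + r • ξ) + M * r) :=
      setIntegral_mono_on (hconst_int (h xtil)) hsum_int hBmeas hpt
    rw [setIntegral_const, integral_add (hint xtil) (hconst_int (M * r)),
      setIntegral_const] at h1
    have h2 : V * h xtil - V * (M * r) ≤ ∫ ξ in B, h (xtil + r • ξ) := by
      simp only [smul_eq_mul] at h1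
      rw [show volume.real B = V from rfl] at h1
      linarith
    rw [setAverage_eq, smul_eq_mul]
    have hnn : (0 : ℝ) ≤ V⁻¹ := inv_nonneg.mpr hVpos.le
    have h3 := mul_le_mul_of_nonneg_left h2 hnn
    have h4 : V⁻¹ * (V * h xtil - V * (M * r)) = h xtil - M * r := by
      field_simp
    rw [h4] at h3
    rw [show volume.real B = V from rfl]
    linarith
  -- combine
  have hmin2 : f xtil + (⨍ ξ in B, h (xtil + r • ξ)) ≤ f xstar + (⨍ ξ in B, h (xstar + r • ξ)) :=
    isMinOn_iff.mp hmintil xstar hxstar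
  calc f xtil + h xtil ≤ f xtil + ((⨍ ξ in B, h (xtil + r • ξ)) + M * r) := by linarith [stepB]
    _ ≤ f xstar + (⨍ ξ in B, h (xstar + r • ξ)) + M * r := by linarith [hmin2]
    _ ≤ f xstar + h xstar + M * r := by linarith [stepA xstar]
end

section
/- (Closed-form solution of the ℓ₁-regularized linear subproblem over the Euclidean ball.) For b ∈ ℝⁿ and ρ > 0, define z componentwise by z_j = sign(b_j)·max{|b_j| − ρ, 0}. Then y* = z/‖z‖₂ if z ≠ 0 (and y* = 0 if z = 0) is a global minimizer of the problem min_{‖y‖₂ ≤ 1} { −yᵀb + ρ‖y‖₁ }. -/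
open scoped RealInnerProductSpace

open scoped Classical in
theorem stmt_19 {n : ℕ} (b : EuclideanSpace ℝ (Fin n)) {rho : ℝ} (hrho : 0 < rho)
    (z : EuclideanSpace ℝ (Fin n))
    (hz : ∀ j, z j = Real.sign (b j) * max (|b j| - rho) 0)
    (ystar : EuclideanSpace ℝ (Fin n))
    (hystar : ystar = if z = 0 then 0 else ‖z‖⁻¹ • z) :
    ystar ∈ Metric.closedBall (0 : EuclideanSpace ℝ (Fin n)) 1 ∧
      IsMinOn (fun y : EuclideanSpace ℝ (Fin n) => -⟪y, b⟫ + rho * ∑ j, |y j|)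
        (Metric.closedBall (0 : EuclideanSpace ℝ (Fin n)) 1) ystar := by
  set m : Fin n → ℝ := fun j => max (|b j| - rho) 0 with hm
  have hm0 : ∀ j, 0 ≤ m j := fun j => le_max_right _ _
  have hzm : ∀ j, z j = Real.sign (b j) * m j := hz
  have habs : ∀ j, |z j| = m j := by
    intro j
    rcases lt_trichotomy (b j) 0 with h | h | h
    · rw [hzm j, Real.sign_of_neg h, abs_mul, abs_neg, abs_one, one_mul,
        abs_of_nonneg (hm0 j)]
    · have hmj : m j = 0 := by
        simp only [hm, h, abs_zero, zero_sub]
        exact max_eq_right (by linarith)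
      rw [hzm j, h, Real.sign_zero, zero_mul, abs_zero, hmj]
    · rw [hzm j, Real.sign_of_pos h, abs_mul, abs_one, one_mul,
        abs_of_nonneg (hm0 j)]
  have hzb : ∀ j, z j * b j = |b j| * m j := by
    intro j
    rcases lt_trichotomy (b j) 0 with h | h | h
    · rw [hzm j, Real.sign_of_neg h, abs_of_neg h]; ring
    · simp [hzm j, h]
    · rw [hzm j, Real.sign_of_pos h, abs_of_pos h]; ring
  have hsq : ∀ j, z j ^ 2 = m j ^ 2 := fun j => by rw [← sq_abs, habs j]
  have hnorm : ‖z‖ = Real.sqrt (∑ j, m j ^ 2) := by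
    rw [EuclideanSpace.norm_eq]
    congr 1
    exact Finset.sum_congr rfl fun j _ => by rw [Real.norm_eq_abs, habs j]
  have hS : ∑ j, m j ^ 2 = ‖z‖ ^ 2 := by
    rw [hnorm, Real.sq_sqrt (Finset.sum_nonneg fun j _ => sq_nonneg _)]
  have hinner : ∀ y : EuclideanSpace ℝ (Fin n), ⟪y, b⟫ = ∑ j, y j * b j := by
    intro y
    simp [PiLp.inner_apply, RCLike.inner_apply, mul_comm]
  -- lower bound
  have hlb : ∀ y : EuclideanSpace ℝ (Fin n), ‖y‖ ≤ 1 →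
      -‖z‖ ≤ -⟪y, b⟫ + rho * ∑ j, |y j| := by
    intro y hy
    have hny : ‖y‖ = Real.sqrt (∑ j, |y j| ^ 2) := by
      rw [EuclideanSpace.norm_eq]
      simp [Real.norm_eq_abs]
    have h1 : ∑ j, |y j| * m j ≤ ‖z‖ := by
      calc ∑ j, |y j| * m j
          ≤ Real.sqrt (∑ j, |y j| ^ 2) * Real.sqrt (∑ j, m j ^ 2) :=
            Real.sum_mul_le_sqrt_mul_sqrt _ _ _
        _ = ‖y‖ * ‖z‖ := by rw [hny, hnorm]
        _ ≤ 1 * ‖z‖ := mul_le_mul_of_nonneg_right hy (norm_nonneg z)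
        _ = ‖z‖ := one_mul _
    have h2 : ∑ j, y j * b j - rho * ∑ j, |y j| ≤ ∑ j, |y j| * m j := by
      rw [Finset.mul_sum, ← Finset.sum_sub_distrib]
      refine Finset.sum_le_sum fun j _ => ?_
      have hab : y j * b j ≤ |y j| * |b j| := by
        calc y j * b j ≤ |y j * b j| := le_abs_self _
          _ = |y j| * |b j| := abs_mul _ _
      have hmm : |b j| - rho ≤ m j := le_max_left _ _
      nlinarith [abs_nonneg (y j)]
    rw [hinner y]
    linarith
  -- value at ystar
  have hval : -⟪ystar, b⟫ + rho * ∑ j, |ystar j| = -‖z‖ := by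
    by_cases h0 : z = 0
    · have hz0 : ‖z‖ = 0 := by rw [h0, norm_zero]
      rw [hystar, if_pos h0, hz0]
      simp
    · have hzn : ‖z‖ ≠ 0 := norm_ne_zero_iff.mpr h0
      have happly : ∀ j, ystar j = ‖z‖⁻¹ * z j := by
        intro j; rw [hystar, if_neg h0]; rfl
      have hi : ⟪ystar, b⟫ = ‖z‖⁻¹ * ∑ j, |b j| * m j := by
        rw [hinner, Finset.mul_sum]
        refine Finset.sum_congr rfl fun j _ => ?_
        rw [happly j, mul_assoc, hzb j]
      have ha : ∑ j, |ystar j| = ‖z‖⁻¹ * ∑ j, m j := by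
        rw [Finset.mul_sum]
        refine Finset.sum_congr rfl fun j _ => ?_
        rw [happly j, abs_mul, abs_of_nonneg (inv_nonneg.mpr (norm_nonneg z)), habs j]
      have key : ∑ j, (rho - |b j|) * m j = -∑ j, m j ^ 2 := by
        rw [← Finset.sum_neg_distrib]
        refine Finset.sum_congr rfl fun j _ => ?_
        rcases (hm0 j).lt_or_eq with h | h
        · have : m j = |b j| - rho := by
            by_contra hc
            have : m j = 0 := by
              rcases max_choice (|b j| - rho) 0 with h' | h'
              · exact absurd h' hc
              · exact h'
            linarith
          rw [this]; ring
        · rw [← h]; ring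
      rw [hi, ha]
      have hAB : -(‖z‖⁻¹ * ∑ j, |b j| * m j) + rho * (‖z‖⁻¹ * ∑ j, m j)
          = ‖z‖⁻¹ * (rho * ∑ j, m j - ∑ j, |b j| * m j) := by ring
      have h4 : rho * ∑ j, m j - ∑ j, |b j| * m j = ∑ j, (rho - |b j|) * m j := by
        rw [Finset.mul_sum, ← Finset.sum_sub_distrib]
        exact Finset.sum_congr rfl fun j _ => by ring
      rw [hAB, h4, key, hS]
      field_simp
  constructor
  · rw [Metric.mem_closedBall, dist_zero_right]
    by_cases h0 : z = 0
    · rw [hystar, if_pos h0, norm_zero]; norm_num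
    · have hzn : ‖z‖ ≠ 0 := norm_ne_zero_iff.mpr h0
      rw [hystar, if_neg h0, norm_smul, norm_inv, norm_norm,
        inv_mul_cancel₀ hzn]
  · rw [isMinOn_iff]
    intro y hy
    rw [Metric.mem_closedBall, dist_zero_right] at hy
    rw [hval]
    exact hlb y hy
end
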